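/- arXiv:1404.2463 — 3 statements merged into one kernel-verified Lean document; each statement's English description precedes it below -/
import Mathlib

section
/- Let 1 < R ≤ ∞, let f be analytic in every ellipse E_ρ with 1 ≤ ρ < R (i.e., f is analytic on the open region ∪_{1≤ρ<R} D̄_ρ), and suppose f is not identically zero. Then log M(ρ) is a convex function of log ρ; that is, the function s ↦ log M(e^s) is convex on the interval [0, log R). -/
open Complex Real MeasureTheory Polynomial

noncomputable section

/-- The point ½(u + u⁻¹) for u = r·e^{iθ}. -/
def joukowski (r θ : ℝ) : ℂ :=
  ((r : ℂ) * Complex.exp (θ * Complex.I) +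
    ((r : ℂ) * Complex.exp (θ * Complex.I))⁻¹) / 2

/-- The Bernstein ellipse E_ρ (the curve). -/
def bernsteinEllipse (ρ : ℝ) : Set ℂ := {z | ∃ θ : ℝ, z = joukowski ρ θ}

/-- The closed interior D̄_ρ of the Bernstein ellipse. -/
def bernsteinDisk (ρ : ℝ) : Set ℂ :=
  {z | ∃ r θ : ℝ, 1 ≤ r ∧ r ≤ ρ ∧ z = joukowski r θ}

/-- `f` is analytic inside and on the Bernstein ellipse `E_ρ`:
analytic on an open set containing the closed interior `D̄_ρ`. -/
def AnalyticOnBernstein (f : ℂ → ℂ) (ρ : ℝ) : Prop :=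
  ∃ U : Set ℂ, IsOpen U ∧ bernsteinDisk ρ ⊆ U ∧ ∀ z ∈ U, AnalyticAt ℂ f z

/-- The n-th Chebyshev coefficient of the first kind of f:
aₙ = (2/π) ∫_{-1}^1 f(x) Tₙ(x)/√(1-x²) dx. -/
def chebCoeffT (f : ℂ → ℂ) (n : ℕ) : ℂ :=
  (2 / π) * ∫ x in (-1:ℝ)..1,
    f x * ((Polynomial.Chebyshev.T ℝ n).eval x / Real.sqrt (1 - x ^ 2) : ℝ)

/-- The n-th Chebyshev coefficient of the second kind of f:
bₙ = (2/π) ∫_{-1}^1 √(1-x²) f(x) Uₙ(x) dx. -/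
def chebCoeffU (f : ℂ → ℂ) (n : ℕ) : ℂ :=
  (2 / π) * ∫ x in (-1:ℝ)..1,
    f x * ((Real.sqrt (1 - x ^ 2) * (Polynomial.Chebyshev.U ℝ n).eval x : ℝ))

/-- The m-point trapezoidal approximation aₙ(m,ρ) of the contour formula for aₙ. -/
def trapT (f : ℂ → ℂ) (ρ : ℝ) (n m : ℕ) : ℂ :=
  (2 / (m * ρ ^ n)) * ∑ j ∈ Finset.range m,
    f (joukowski ρ (2 * π * j / m)) * Complex.exp (-(2 * π * j * n / m) * Complex.I)

/-- The m-point trapezoidal approximation bₙ(m,ρ) of the contour formula for bₙ. -/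
def trapU (f : ℂ → ℂ) (ρ : ℝ) (n m : ℕ) : ℂ :=
  (1 / (m * ρ ^ n)) * ∑ j ∈ Finset.range m,
    f (joukowski ρ (2 * π * j / m)) *
      (1 - (ρ:ℂ)⁻¹ ^ 2 * Complex.exp (-(4 * π * j / m) * Complex.I)) *
      Complex.exp (-(2 * π * j * n / m) * Complex.I)

/-- The supremum norm ‖g‖_{E_ρ} of g on the Bernstein ellipse E_ρ. -/
def ellipseNorm (g : ℂ → ℂ) (ρ : ℝ) : ℝ :=
  sSup ((fun z => ‖g z‖) '' bernsteinEllipse ρ)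

/-- The polynomial s(z) = η₀/2 + ∑_{k=1}^{m-1} ηₖ Tₖ(z) of degree ≤ m−1 in Chebyshev form. -/
def chebPoly (η : ℕ → ℂ) (m : ℕ) (z : ℂ) : ℂ :=
  η 0 / 2 + ∑ k ∈ Finset.Icc 1 (m - 1), η k * (Polynomial.Chebyshev.T ℂ k).eval z

/-- M(ρ) = (1/π) ∫₀^{2π} |f(½(ρe^{iθ}+(ρe^{iθ})⁻¹))| dθ. -/
def Mfun (f : ℂ → ℂ) (ρ : ℝ) : ℝ :=
  (1 / π) * ∫ θ in (0:ℝ)..(2 * π), ‖f (joukowski ρ θ)‖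

/-- The open region ∪_{1 ≤ ρ < R} D̄_ρ swept out by the Bernstein ellipses of
parameter 1 ≤ ρ < R (where R may be ∞). -/
def ellipseRegion (R : EReal) : Set ℂ :=
  {z | ∃ r θ : ℝ, 1 ≤ r ∧ (r : EReal) < R ∧ z = joukowski r θ}

def Gf (f : ℂ → ℂ) (u : ℂ) : ℂ := f ((u + u⁻¹) / 2)

lemma Gf_joukowski (f : ℂ → ℂ) (r θ : ℝ) :
    Gf f ((r : ℂ) * Complex.exp (θ * Complex.I)) = f (joukowski r θ) := rfl

def annulus (R' : ℝ) : Set ℂ := {u : ℂ | R'⁻¹ < ‖u‖ ∧ ‖u‖ < R'}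

lemma annulus_isOpen (R' : ℝ) : IsOpen (annulus R') := by
  have : annulus R' = (norm ⁻¹' (Set.Ioo R'⁻¹ R')) := rfl
  rw [this]
  exact (isOpen_Ioo).preimage continuous_norm

lemma mem_annulus_ne_zero {R' : ℝ} (hR' : 1 < R') {u : ℂ} (hu : u ∈ annulus R') : u ≠ 0 := by
  intro h
  subst h
  simp only [annulus, norm_zero, Set.mem_setOf_eq] at hu
  exact lt_asymm hu.1 (by positivity : (0:ℝ) < R'⁻¹)

lemma mem_ellipseRegion {R : EReal} {u : ℂ} {R' : ℝ} (hR'1 : 1 < R')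
    (hR' : (R' : EReal) ≤ R) (hu : u ∈ annulus R') :
    (u + u⁻¹) / 2 ∈ ellipseRegion R := by
  obtain ⟨h1, h2⟩ := hu
  have hu0 : u ≠ 0 := mem_annulus_ne_zero hR'1 ⟨h1, h2⟩
  have habs : 0 < ‖u‖ := by simpa using hu0
  rcases le_or_gt 1 (‖u‖) with h | h
  · refine ⟨‖u‖, Complex.arg u, h, lt_of_lt_of_le ?_ hR', ?_⟩
    · exact_mod_cast h2
    · rw [joukowski, Complex.norm_mul_exp_arg_mul_I]
  · refine ⟨‖u⁻¹‖, Complex.arg u⁻¹, ?_, lt_of_lt_of_le ?_ hR', ?_⟩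
    · rw [norm_inv]
      exact (one_le_inv₀ habs).mpr h.le
    · rw [norm_inv]
      have : (‖u‖)⁻¹ < R' := by
        rw [inv_lt_comm₀ habs (lt_trans one_pos hR'1)]
        exact h1
      exact_mod_cast this
    · rw [joukowski, Complex.norm_mul_exp_arg_mul_I, inv_inv, add_comm]

lemma analyticAt_Gf {R : EReal} {R' : ℝ} (hR'1 : 1 < R') (hR' : (R' : EReal) ≤ R)
    {f : ℂ → ℂ} (hf : ∀ z ∈ ellipseRegion R, AnalyticAt ℂ f z)
    {u : ℂ} (hu : u ∈ annulus R') : AnalyticAt ℂ (Gf f) u := by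
  have hu0 : u ≠ 0 := mem_annulus_ne_zero hR'1 hu
  have hin : AnalyticAt ℂ (fun z : ℂ => (z + z⁻¹) / 2) u := by
    exact (analyticAt_id.add (analyticAt_id.inv hu0)).div analyticAt_const two_ne_zero
  exact AnalyticAt.comp (f := fun z : ℂ => (z + z⁻¹) / 2)
    (hf _ (mem_ellipseRegion hR'1 hR' hu)) hin

lemma exists_R' {R : EReal} {a : ℝ} (h : (a : EReal) < R) :
    ∃ R' : ℝ, a < R' ∧ (R' : EReal) ≤ R := by
  rcases exists_between h with ⟨c, hc1, hc2⟩
  have hct : c ≠ ⊤ := ne_top_of_lt hc2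
  have hcb : c ≠ ⊥ := ne_bot_of_gt hc1
  lift c to ℝ using ⟨hct, hcb⟩
  exact ⟨c, by exact_mod_cast hc1, hc2.le⟩

lemma continuousOn_Gf {R : EReal} {R' : ℝ} (hR'1 : 1 < R') (hR' : (R' : EReal) ≤ R)
    {f : ℂ → ℂ} (hf : ∀ z ∈ ellipseRegion R, AnalyticAt ℂ f z) :
    ContinuousOn (Gf f) (annulus R') := fun u hu =>
  (analyticAt_Gf hR'1 hR' hf hu).continuousAt.continuousWithinAt

lemma continuous_circle_mul (ρ : ℝ) : Continuous fun t : ℝ => (ρ:ℂ) * Complex.exp (↑t * Complex.I) := by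
  fun_prop

lemma circle_mem_annulus {R' ρ : ℝ} (hR'1 : 1 < R') (hρ1 : 1 ≤ ρ) (hρ2 : ρ < R') (t : ℝ) :
    (ρ:ℂ) * Complex.exp (↑t * Complex.I) ∈ annulus R' := by
  have : ‖(ρ:ℂ) * Complex.exp (↑t * Complex.I)‖ = ρ := by
    rw [norm_mul, Complex.norm_exp_ofReal_mul_I, mul_one, Complex.norm_real, Real.norm_eq_abs,
      _root_.abs_of_nonneg (by linarith : (0:ℝ) ≤ ρ)]
  constructor
  · rw [this]; calc R'⁻¹ < 1 := by rw [inv_lt_one_iff₀]; right; exact hR'1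
      _ ≤ ρ := hρ1
  · rw [this]; exact hρ2

lemma isPreconnected_annulus {R' : ℝ} (hR'1 : 1 < R') : IsPreconnected (annulus R') := by
  have h0 : (0:ℝ) < R'⁻¹ := by positivity
  have : annulus R' = (fun p : ℝ × ℝ => (p.1 : ℂ) * Complex.exp (↑p.2 * Complex.I)) ''
      (Set.Ioo R'⁻¹ R' ×ˢ Set.univ) := by
    ext u
    constructor
    · rintro ⟨h1, h2⟩
      exact ⟨⟨‖u‖, Complex.arg u⟩, ⟨⟨h1, h2⟩, Set.mem_univ _⟩,
        Complex.norm_mul_exp_arg_mul_I u⟩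
    · rintro ⟨⟨r, θ⟩, ⟨⟨hr1, hr2⟩, -⟩, rfl⟩
      have : ‖(r:ℂ) * Complex.exp (↑θ * Complex.I)‖ = r := by
        rw [norm_mul, Complex.norm_exp_ofReal_mul_I, mul_one, Complex.norm_real, Real.norm_eq_abs,
          _root_.abs_of_nonneg (le_of_lt (lt_trans h0 hr1))]
      exact ⟨by rw [this]; exact hr1, by rw [this]; exact hr2⟩
  rw [this]
  exact ((isPreconnected_Ioo.prod isPreconnected_univ)).image _
    (by fun_prop : Continuous fun p : ℝ × ℝ => (p.1 : ℂ) * Complex.exp (↑p.2 * Complex.I)).continuousOn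

lemma continuous_absGf_circle {R : EReal} {R' : ℝ} (hR'1 : 1 < R') (hR' : (R' : EReal) ≤ R)
    {f : ℂ → ℂ} (hf : ∀ z ∈ ellipseRegion R, AnalyticAt ℂ f z)
    {ρ : ℝ} (hρ1 : 1 ≤ ρ) (hρ2 : ρ < R') :
    Continuous fun t : ℝ => ‖Gf f ((ρ:ℂ) * Complex.exp (↑t * Complex.I))‖ :=
  continuous_norm.comp ((continuousOn_Gf hR'1 hR' hf).comp_continuous
    (continuous_circle_mul ρ) (circle_mem_annulus hR'1 hρ1 hρ2))

lemma Mfun_pos {R : EReal} (hR : 1 < R) {f : ℂ → ℂ}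
    (hf : ∀ z ∈ ellipseRegion R, AnalyticAt ℂ f z)
    (hne : ∃ z ∈ ellipseRegion R, f z ≠ 0)
    {ρ : ℝ} (hρ1 : 1 ≤ ρ) (hρR : (ρ : EReal) < R) : 0 < Mfun f ρ := by
  obtain ⟨z0, ⟨r0, θ0, hr0, hr0R, rfl⟩, hfz0⟩ := hne
  have hπ : (0:ℝ) < π := Real.pi_pos
  have hmax : ((max ρ r0 : ℝ) : EReal) < R := by
    rcases max_cases ρ r0 with ⟨h, -⟩ | ⟨h, -⟩ <;> rw [h] <;> assumption
  obtain ⟨R', hR'gt, hR'le⟩ := exists_R' hmax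
  have hρlt : ρ < R' := lt_of_le_of_lt (le_max_left _ _) hR'gt
  have hr0lt : r0 < R' := lt_of_le_of_lt (le_max_right _ _) hR'gt
  have hR'1 : 1 < R' := lt_of_le_of_lt (le_trans hρ1 (le_max_left _ _)) hR'gt
  set q : ℝ → ℝ := fun t => ‖Gf f ((ρ:ℂ) * Complex.exp (↑t * Complex.I))‖ with hqdef
  have hqc : Continuous q := continuous_absGf_circle hR'1 hR'le hf hρ1 hρlt
  have hqi : IntervalIntegrable q volume 0 (2*π) := hqc.intervalIntegrable _ _
  have hM : Mfun f ρ = (1/π) * ∫ t in (0:ℝ)..(2*π), q t := rfl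
  rw [hM]
  have key : 0 < ∫ t in (0:ℝ)..(2*π), q t := by
    rw [intervalIntegral.integral_pos_iff_support_of_nonneg_ae
      (Filter.Eventually.of_forall (fun t => norm_nonneg _)) hqi]
    refine ⟨by linarith, ?_⟩
    by_contra hm
    push_neg at hm
    rw [le_zero_iff] at hm
    have hzero : Function.support q ∩ Set.Ioo 0 (2*π) = ∅ := by
      refine ((hqc.isOpen_support.inter isOpen_Ioo).measure_eq_zero_iff volume).mp ?_
      refine measure_mono_null ?_ hm
      exact Set.inter_subset_inter_right _ Set.Ioo_subset_Ioc_self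
    have hq0 : ∀ t ∈ Set.Ioo (0:ℝ) (2*π), Gf f ((ρ:ℂ) * Complex.exp (↑t * Complex.I)) = 0 := by
      intro t ht
      by_contra hne'
      have : t ∈ Function.support q ∩ Set.Ioo 0 (2*π) :=
        ⟨by simp [hqdef, hne'], ht⟩
      rw [hzero] at this
      exact this
    -- frequently zero near (ρ : ℂ)
    have hρ0 : (0:ℝ) < ρ := lt_of_lt_of_le one_pos hρ1
    have hρC : (ρ:ℂ) ≠ 0 := by exact_mod_cast (ne_of_gt hρ0)
    have hfreq : ∃ᶠ u in nhdsWithin (ρ:ℂ) {(ρ:ℂ)}ᶜ, Gf f u = 0 := by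
      have hcont : Filter.Tendsto (fun t : ℝ => (ρ:ℂ) * Complex.exp (↑t * Complex.I))
          (nhds 0) (nhds (ρ:ℂ)) := by
        have := (continuous_circle_mul ρ).tendsto 0
        simpa using this
      have hIoo : Set.Ioo (0:ℝ) (2*π) ∈ nhdsWithin (0:ℝ) (Set.Ioi (0:ℝ)) :=
        Ioo_mem_nhdsGT_of_mem ⟨le_refl _, by linarith⟩
      have hne2 : ∀ t ∈ Set.Ioo (0:ℝ) (2*π), (ρ:ℂ) * Complex.exp (↑t * Complex.I) ≠ (ρ:ℂ) := by
        intro t ht heq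
        have hexp : Complex.exp (↑t * Complex.I) = 1 :=
          mul_left_cancel₀ hρC (by rw [mul_one]; exact heq)
        rw [Complex.exp_eq_one_iff] at hexp
        obtain ⟨n, hn⟩ := hexp
        have htn : (t:ℂ) = (n:ℂ) * (2*π) := by
          have : (t:ℂ) * Complex.I = ((n:ℂ) * (2*π)) * Complex.I := by
            rw [hn]; ring
          exact mul_right_cancel₀ Complex.I_ne_zero this
        have htn' : t = (n:ℝ) * (2*π) := by exact_mod_cast htn
        have hn0 : (0:ℤ) < n := by
          have : (0:ℝ) < (n:ℝ) := by nlinarith [ht.1]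
          exact_mod_cast this
        have hn1 : (1:ℝ) ≤ (n:ℝ) := by exact_mod_cast hn0
        nlinarith [ht.2]
      have htend : Filter.Tendsto (fun t : ℝ => (ρ:ℂ) * Complex.exp (↑t * Complex.I))
          (nhdsWithin 0 (Set.Ioi 0)) (nhdsWithin (ρ:ℂ) {(ρ:ℂ)}ᶜ) := by
        apply tendsto_nhdsWithin_of_tendsto_nhds_of_eventually_within
        · exact hcont.mono_left nhdsWithin_le_nhds
        · filter_upwards [hIoo] with t ht
          exact hne2 t ht
      have hev : ∀ᶠ t : ℝ in nhdsWithin (0:ℝ) (Set.Ioi (0:ℝ)),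
          Gf f ((ρ:ℂ) * Complex.exp (↑t * Complex.I)) = 0 := by
        filter_upwards [hIoo] with t ht using hq0 t ht
      exact htend.frequently hev.frequently
    -- identity theorem on the annulus
    have hGU : AnalyticOnNhd ℂ (Gf f) (annulus R') :=
      fun u hu => analyticAt_Gf hR'1 hR'le hf hu
    have hρmem : (ρ:ℂ) ∈ annulus R' := by
      have h1 : ‖(ρ:ℂ)‖ = ρ := by
        rw [Complex.norm_real, Real.norm_eq_abs, _root_.abs_of_nonneg hρ0.le]
      exact ⟨by rw [h1]; exact lt_of_lt_of_le (by rw [inv_lt_one_iff₀]; right; exact hR'1) hρ1,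
        by rw [h1]; exact hρlt⟩
    have heq := hGU.eqOn_zero_of_preconnected_of_frequently_eq_zero
      (isPreconnected_annulus hR'1) hρmem hfreq
    have hu0 : (r0:ℂ) * Complex.exp (↑θ0 * Complex.I) ∈ annulus R' :=
      circle_mem_annulus hR'1 hr0 hr0lt θ0
    exact hfz0 (heq hu0)
  positivity

-- ψ and its properties
def psi (f : ℂ → ℂ) (ρ : ℝ) (t : ℝ) : ℂ :=
  if Gf f ((ρ:ℂ) * Complex.exp (↑t * Complex.I)) = 0 then 1
  else (‖Gf f ((ρ:ℂ) * Complex.exp (↑t * Complex.I))‖ : ℂ) /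
    Gf f ((ρ:ℂ) * Complex.exp (↑t * Complex.I))

lemma psi_norm_le (f : ℂ → ℂ) (ρ t : ℝ) : ‖psi f ρ t‖ ≤ 1 := by
  unfold psi
  split_ifs with h
  · simp
  · rw [norm_div, Complex.norm_real, Real.norm_eq_abs, _root_.abs_of_nonneg (norm_nonneg _),
      div_self (by simpa using h)]

lemma mul_psi (f : ℂ → ℂ) (ρ t : ℝ) :
    Gf f ((ρ:ℂ) * Complex.exp (↑t * Complex.I)) * psi f ρ t =
      (‖Gf f ((ρ:ℂ) * Complex.exp (↑t * Complex.I))‖ : ℂ) := by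
  unfold psi
  split_ifs with h
  · simp [h]
  · field_simp

lemma psi_measurable {R : EReal} {R' : ℝ} (hR'1 : 1 < R') (hR' : (R' : EReal) ≤ R)
    {f : ℂ → ℂ} (hf : ∀ z ∈ ellipseRegion R, AnalyticAt ℂ f z)
    {ρ : ℝ} (hρ1 : 1 ≤ ρ) (hρ2 : ρ < R') : Measurable (psi f ρ) := by
  have hc : Continuous fun t : ℝ => Gf f ((ρ:ℂ) * Complex.exp (↑t * Complex.I)) :=
    (continuousOn_Gf hR'1 hR' hf).comp_continuous (continuous_circle_mul ρ)
      (circle_mem_annulus hR'1 hρ1 hρ2)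
  unfold psi
  apply Measurable.ite
  · exact hc.measurable (measurableSet_singleton 0)
  · exact measurable_const
  · exact (Complex.measurable_ofReal.comp (continuous_norm.measurable.comp hc.measurable)).div
      hc.measurable

lemma mem_annulus_mul_exp {R' : ℝ} {x : ℂ} (hx : x ∈ annulus R') (t : ℝ) :
    x * Complex.exp (↑t * Complex.I) ∈ annulus R' := by
  have : ‖x * Complex.exp (↑t * Complex.I)‖ = ‖x‖ := by
    rw [norm_mul, Complex.norm_exp_ofReal_mul_I, mul_one]
  exact ⟨by rw [this]; exact hx.1, by rw [this]; exact hx.2⟩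

lemma phi_differentiableAt {R : EReal} {R' : ℝ} (hR'1 : 1 < R') (hR' : (R' : EReal) ≤ R)
    {f : ℂ → ℂ} (hf : ∀ z ∈ ellipseRegion R, AnalyticAt ℂ f z)
    {ψ : ℝ → ℂ} (hψm : Measurable ψ) (hψ1 : ∀ t, ‖ψ t‖ ≤ 1)
    {u₀ : ℂ} (hu₀ : u₀ ∈ annulus R') :
    DifferentiableAt ℂ
      (fun u => ∫ t in (0:ℝ)..(2*π), Gf f (u * Complex.exp (↑t * Complex.I)) * ψ t) u₀ := by
  have hR'0 : (0:ℝ) < R'⁻¹ := by positivity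
  have hu₀abs : R'⁻¹ < ‖u₀‖ ∧ ‖u₀‖ < R' := hu₀
  -- choose ε
  set ε : ℝ := min ((‖u₀‖ - R'⁻¹) / 2) ((R' - ‖u₀‖) / 2) with hεdef
  have hε : 0 < ε := by
    apply lt_min <;> linarith [hu₀abs.1, hu₀abs.2]
  set a : ℝ := ‖u₀‖ - ε with hadef
  set b : ℝ := ‖u₀‖ + ε with hbdef
  have haR : R'⁻¹ < a := by
    have : ε ≤ (‖u₀‖ - R'⁻¹) / 2 := min_le_left _ _
    simp only [hadef]; linarith [hu₀abs.1]
  have hbR : b < R' := by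
    have : ε ≤ (R' - ‖u₀‖) / 2 := min_le_right _ _
    simp only [hbdef]; linarith [hu₀abs.2]
  -- compact set K
  set K : Set ℂ := norm ⁻¹' Set.Icc a b with hKdef
  have hKsub : K ⊆ annulus R' := fun u hu => ⟨lt_of_lt_of_le haR hu.1, lt_of_le_of_lt hu.2 hbR⟩
  have hKcompact : IsCompact K := by
    apply Metric.isCompact_of_isClosed_isBounded
    · exact isClosed_Icc.preimage continuous_norm
    · apply Metric.isBounded_iff_subset_closedBall (0:ℂ) |>.mpr
      exact ⟨b, fun u hu => by
        simp only [Metric.mem_closedBall, dist_zero_right]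
        exact hu.2⟩
  -- ball points land in K after rotation
  have hball : ∀ x ∈ Metric.ball u₀ ε, ∀ t : ℝ, x * Complex.exp (↑t * Complex.I) ∈ K := by
    intro x hx t
    have hd : ‖x - u₀‖ < ε := by
      simpa [Complex.dist_eq] using hx
    have h1 : ‖x‖ ≤ ‖u₀‖ + ε := by
      calc ‖x‖ = ‖u₀ + (x - u₀)‖ := by ring_nf
        _ ≤ ‖u₀‖ + ‖x - u₀‖ := norm_add_le _ _
        _ ≤ ‖u₀‖ + ε := by linarith
    have h2 : ‖u₀‖ - ε ≤ ‖x‖ := by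
      have h4 : ‖u₀‖ - ‖x‖ ≤ ‖u₀ - x‖ := by
        simpa using norm_sub_norm_le u₀ x
      have h3 : ‖u₀ - x‖ = ‖x - u₀‖ := by
        rw [← norm_neg]; ring_nf
      linarith
    have habs : ‖x * Complex.exp (↑t * Complex.I)‖ = ‖x‖ := by
      rw [norm_mul, Complex.norm_exp_ofReal_mul_I, mul_one]
    exact ⟨by rw [habs]; exact h2, by rw [habs]; exact h1⟩
  -- analyticity on a neighborhood of K
  have hGan : AnalyticOnNhd ℂ (Gf f) (annulus R') := fun u hu => analyticAt_Gf hR'1 hR' hf hu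
  have hGd : AnalyticOnNhd ℂ (deriv (Gf f)) (annulus R') := hGan.deriv
  -- bounds
  obtain ⟨C, hC⟩ := hKcompact.exists_bound_of_continuousOn
    ((continuousOn_Gf hR'1 hR' hf).mono hKsub)
  have hderivCont : ContinuousOn (deriv (Gf f)) (annulus R') :=
    fun u hu => (hGd u hu).continuousAt.continuousWithinAt
  obtain ⟨C', hC'⟩ := hKcompact.exists_bound_of_continuousOn (hderivCont.mono hKsub)
  have hu₀K : u₀ ∈ K := by
    constructor
    · simp only [hadef]; linarith
    · simp only [hbdef]; linarith
  have hC0 : 0 ≤ C := le_trans (norm_nonneg _) (hC u₀ hu₀K)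
  have hC'0 : 0 ≤ C' := le_trans (norm_nonneg _) (hC' u₀ hu₀K)
  -- apply dominated differentiation
  have main := intervalIntegral.hasDerivAt_integral_of_dominated_loc_of_deriv_le
    (F := fun x t => Gf f (x * Complex.exp (↑t * Complex.I)) * ψ t)
    (F' := fun x t => deriv (Gf f) (x * Complex.exp (↑t * Complex.I)) * Complex.exp (↑t * Complex.I) * ψ t)
    (x₀ := u₀) (a := 0) (b := 2*π) (μ := volume) (bound := fun _ => C') (Metric.ball_mem_nhds u₀ hε)
    ?_ ?_ ?_ ?_ ?_ ?_
  · exact main.2.differentiableAt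
  · -- hF_meas
    filter_upwards [(annulus_isOpen R').mem_nhds hu₀] with x hx
    have hc : Continuous fun t : ℝ => Gf f (x * Complex.exp (↑t * Complex.I)) :=
      (continuousOn_Gf hR'1 hR' hf).comp_continuous (by fun_prop)
        (fun t => mem_annulus_mul_exp hx t)
    exact (hc.aestronglyMeasurable.mul hψm.aestronglyMeasurable)
  · -- hF_int
    have hc : Continuous fun t : ℝ => Gf f (u₀ * Complex.exp (↑t * Complex.I)) :=
      (continuousOn_Gf hR'1 hR' hf).comp_continuous (by fun_prop)
        (fun t => mem_annulus_mul_exp hu₀ t)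
    apply IntervalIntegrable.mono_fun (intervalIntegrable_const (c := C))
    · exact hc.aestronglyMeasurable.mul hψm.aestronglyMeasurable
    · apply Filter.Eventually.of_forall
      intro t
      have hmem : u₀ * Complex.exp (↑t * Complex.I) ∈ K :=
        hball u₀ (Metric.mem_ball_self hε) t
      calc ‖Gf f (u₀ * Complex.exp (↑t * Complex.I)) * ψ t‖
          = ‖Gf f (u₀ * Complex.exp (↑t * Complex.I))‖ * ‖ψ t‖ := by
            rw [norm_mul]
        _ ≤ C * 1 := mul_le_mul (hC _ hmem) (hψ1 t) (norm_nonneg _) hC0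
        _ = ‖C‖ := by rw [mul_one, Real.norm_eq_abs, _root_.abs_of_nonneg hC0]
  · -- hF'_meas
    have hc : Continuous fun t : ℝ =>
        deriv (Gf f) (u₀ * Complex.exp (↑t * Complex.I)) * Complex.exp (↑t * Complex.I) := by
      apply Continuous.mul _ (by fun_prop)
      exact hderivCont.comp_continuous (by fun_prop) (fun t => mem_annulus_mul_exp hu₀ t)
    exact hc.aestronglyMeasurable.mul hψm.aestronglyMeasurable
  · -- h_bound
    apply Filter.Eventually.of_forall
    intro t _ x hx
    have hmem := hball x hx t
    calc ‖deriv (Gf f) (x * Complex.exp (↑t * Complex.I)) * Complex.exp (↑t * Complex.I) * ψ t‖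
        = ‖deriv (Gf f) (x * Complex.exp (↑t * Complex.I))‖ *
          ‖Complex.exp (↑t * Complex.I)‖ * ‖ψ t‖ := by
          rw [norm_mul, norm_mul]
      _ ≤ C' * 1 * 1 := by
          apply mul_le_mul _ (hψ1 t) (norm_nonneg _) (by positivity)
          apply mul_le_mul (hC' _ hmem) (le_of_eq (Complex.norm_exp_ofReal_mul_I t))
            (norm_nonneg _) hC'0
      _ = C' := by ring
  · exact intervalIntegrable_const
  · -- h_diff
    apply Filter.Eventually.of_forall
    intro t _ x hx
    have hmem := hball x hx t
    have h1 : HasDerivAt (Gf f) (deriv (Gf f) (x * Complex.exp (↑t * Complex.I)))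
        (x * Complex.exp (↑t * Complex.I)) :=
      ((hGan _ (hKsub hmem)).differentiableAt).hasDerivAt
    have h2 : HasDerivAt (fun y : ℂ => y * Complex.exp (↑t * Complex.I))
        (Complex.exp (↑t * Complex.I)) x := by
      simpa using (hasDerivAt_id x).mul_const (Complex.exp (↑t * Complex.I))
    have h3 := h1.comp x h2
    exact h3.mul_const (ψ t)

lemma Mfun_nonneg (f : ℂ → ℂ) (ρ : ℝ) : 0 ≤ Mfun f ρ := by
  have hπ := Real.pi_pos
  apply mul_nonneg (by positivity)
  exact intervalIntegral.integral_nonneg (by linarith) (fun t _ => norm_nonneg _)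

lemma q_periodic (f : ℂ → ℂ) (ρ : ℝ) :
    Function.Periodic (fun t : ℝ => ‖Gf f ((ρ:ℂ) * Complex.exp (↑t * Complex.I))‖)
      (2*π) := by
  intro t
  have h : Complex.exp ((↑(t + 2*π) : ℂ) * Complex.I) = Complex.exp (↑t * Complex.I) := by
    push_cast
    rw [add_mul, Complex.exp_add, Complex.exp_two_pi_mul_I, mul_one]
  simp only [h]

lemma shift_integral (q : ℝ → ℝ) (hper : Function.Periodic q (2*π)) (α : ℝ) :
    ∫ t in (0:ℝ)..(2*π), q (α + t) = ∫ t in (0:ℝ)..(2*π), q t := by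
  rw [intervalIntegral.integral_comp_add_left q α]
  simpa using hper.intervalIntegral_add_eq α 0

lemma key {R : EReal} (hR : 1 < R) {f : ℂ → ℂ} (hf : ∀ z ∈ ellipseRegion R, AnalyticAt ℂ f z)
    {ρ1 ρ2 x : ℝ} (h1 : 1 ≤ ρ1) (h2 : 1 ≤ ρ2) (hR1 : (ρ1:EReal) < R) (hR2 : (ρ2:EReal) < R)
    (hx0 : 0 ≤ x) (hx1 : x ≤ 1) :
    Mfun f (ρ1 ^ (1-x) * ρ2 ^ x) ≤ Mfun f ρ1 ^ (1-x) * Mfun f ρ2 ^ x := by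
  have hπ : (0:ℝ) < π := Real.pi_pos
  have hρ1pos : (0:ℝ) < ρ1 := lt_of_lt_of_le one_pos h1
  have hρ2pos : (0:ℝ) < ρ2 := lt_of_lt_of_le one_pos h2
  have hmax : ((max ρ1 ρ2 : ℝ) : EReal) < R := by
    rcases max_cases ρ1 ρ2 with ⟨h, -⟩ | ⟨h, -⟩ <;> rw [h] <;> assumption
  obtain ⟨R', hR'gt, hR'le⟩ := exists_R' hmax
  have hρ1lt : ρ1 < R' := lt_of_le_of_lt (le_max_left _ _) hR'gt
  have hρ2lt : ρ2 < R' := lt_of_le_of_lt (le_max_right _ _) hR'gt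
  have hR'1 : 1 < R' := lt_of_le_of_lt (le_trans h1 (le_max_left _ _)) hR'gt
  set d : ℝ := Real.log ρ1 with hddef
  set c : ℝ := Real.log ρ2 - Real.log ρ1 with hcdef
  have hd0 : 0 ≤ d := Real.log_nonneg h1
  have hl2 : 0 ≤ Real.log ρ2 := Real.log_nonneg h2
  -- bounds for exp (d + r * c), r ∈ [0,1]
  have hexp_bound : ∀ r : ℝ, 0 ≤ r → r ≤ 1 →
      1 ≤ Real.exp (d + r * c) ∧ Real.exp (d + r * c) ≤ max ρ1 ρ2 := by
    intro r hr0 hr1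
    have heq : d + r * c = (1 - r) * Real.log ρ1 + r * Real.log ρ2 := by
      simp only [hddef, hcdef]; ring
    constructor
    · rw [heq]
      have : 0 ≤ (1 - r) * Real.log ρ1 + r * Real.log ρ2 := by
        apply add_nonneg (mul_nonneg (by linarith) hd0) (mul_nonneg hr0 hl2)
      calc (1:ℝ) = Real.exp 0 := (Real.exp_zero).symm
        _ ≤ _ := Real.exp_le_exp.mpr this
    · rw [heq]
      have hle1 : Real.log ρ1 ≤ Real.log (max ρ1 ρ2) :=
        Real.log_le_log hρ1pos (le_max_left _ _)
      have hle2 : Real.log ρ2 ≤ Real.log (max ρ1 ρ2) :=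
        Real.log_le_log hρ2pos (le_max_right _ _)
      have : (1 - r) * Real.log ρ1 + r * Real.log ρ2 ≤ Real.log (max ρ1 ρ2) := by
        calc (1 - r) * Real.log ρ1 + r * Real.log ρ2
            ≤ (1 - r) * Real.log (max ρ1 ρ2) + r * Real.log (max ρ1 ρ2) := by
              apply add_le_add (mul_le_mul_of_nonneg_left hle1 (by linarith))
                (mul_le_mul_of_nonneg_left hle2 hr0)
          _ = Real.log (max ρ1 ρ2) := by ring
      calc Real.exp ((1 - r) * Real.log ρ1 + r * Real.log ρ2)
          ≤ Real.exp (Real.log (max ρ1 ρ2)) := Real.exp_le_exp.mpr this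
        _ = max ρ1 ρ2 := Real.exp_log (lt_of_lt_of_le hρ1pos (le_max_left _ _))
  set ρ : ℝ := ρ1 ^ (1-x) * ρ2 ^ x with hρdef
  have hρeq : ρ = Real.exp (d + x * c) := by
    rw [hρdef, Real.rpow_def_of_pos hρ1pos, Real.rpow_def_of_pos hρ2pos, ← Real.exp_add]
    congr 1
    simp only [hddef, hcdef]; ring
  have hρge : 1 ≤ ρ := by rw [hρeq]; exact (hexp_bound x hx0 hx1).1
  have hρle : ρ ≤ max ρ1 ρ2 := by rw [hρeq]; exact (hexp_bound x hx0 hx1).2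
  have hρlt : ρ < R' := lt_of_le_of_lt hρle hR'gt
  -- the conformal map of the strip into the annulus
  set E : ℂ → ℂ := fun w => Complex.exp (↑d + w * ↑c) with hEdef
  have habsE : ∀ w : ℂ, ‖E w‖ = Real.exp (d + w.re * c) := by
    intro w
    rw [hEdef, Complex.norm_exp]
    congr 1
    simp [Complex.add_re, Complex.mul_re]
  have hE_mem : ∀ w : ℂ, w.re ∈ Set.Icc (0:ℝ) 1 → E w ∈ annulus R' := by
    intro w hw
    obtain ⟨hg1, hg2⟩ := hexp_bound w.re hw.1 hw.2
    constructor
    · rw [habsE]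
      exact lt_of_lt_of_le (by rw [inv_lt_one_iff₀]; right; exact hR'1) hg1
    · rw [habsE]
      exact lt_of_le_of_lt hg2 hR'gt
  have hEcont : Continuous E := by fun_prop
  have hEdiff : Differentiable ℂ E := by
    apply Complex.differentiable_exp.comp
    exact (differentiable_const _).add (differentiable_id.mul_const _)
  -- the decomposition of E z * exp(t I)
  have hdecomp : ∀ (z : ℂ) (t : ℝ), E z * Complex.exp (↑t * Complex.I) =
      ((Real.exp (d + z.re * c) : ℝ) : ℂ) * Complex.exp ((↑(z.im * c + t) : ℂ) * Complex.I) := by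
    intro z t
    rw [hEdef]
    rw [← Complex.exp_add, Complex.ofReal_exp, ← Complex.exp_add]
    congr 1
    rw [Complex.ext_iff]
    push_cast
    constructor <;> simp <;> ring
  set ψ : ℝ → ℂ := psi f ρ with hψdef
  have hψm : Measurable ψ := psi_measurable hR'1 hR'le hf hρge hρlt
  have hψ1 : ∀ t, ‖ψ t‖ ≤ 1 := psi_norm_le f ρ
  set Φ : ℂ → ℂ := fun u => ∫ t in (0:ℝ)..(2*π), Gf f (u * Complex.exp (↑t * Complex.I)) * ψ t
    with hΦdef
  set F : ℂ → ℂ := fun w => Φ (E w) with hFdef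
  -- differentiability and continuity
  have hΦdiff : ∀ u ∈ annulus R', DifferentiableAt ℂ Φ u :=
    fun u hu => phi_differentiableAt hR'1 hR'le hf hψm hψ1 hu
  have hd : DiffContOnCl ℂ F (Complex.HadamardThreeLines.verticalStrip 0 1) := by
    constructor
    · intro w hw
      have hwre : w.re ∈ Set.Icc (0:ℝ) 1 := ⟨hw.1.le, hw.2.le⟩
      exact ((hΦdiff (E w) (hE_mem w hwre)).comp w (hEdiff w)).differentiableWithinAt
    · have hsub : closure (Complex.HadamardThreeLines.verticalStrip 0 1) ⊆
          Complex.HadamardThreeLines.verticalClosedStrip 0 1 := by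
        apply closure_minimal
        · exact fun w hw => ⟨hw.1.le, hw.2.le⟩
        · exact isClosed_Icc.preimage Complex.continuous_re
      apply ContinuousOn.mono _ hsub
      apply ContinuousOn.comp (fun u hu => (hΦdiff u hu).continuousAt.continuousWithinAt)
        hEcont.continuousOn
      exact fun w hw => hE_mem w hw
  -- boundedness
  set K : Set ℂ := norm ⁻¹' Set.Icc 1 (max ρ1 ρ2) with hKdef
  have hKsub : K ⊆ annulus R' := by
    intro u hu
    constructor
    · exact lt_of_lt_of_le (by rw [inv_lt_one_iff₀]; right; exact hR'1) hu.1
    · exact lt_of_le_of_lt hu.2 hR'gt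
  have hKcompact : IsCompact K := by
    apply Metric.isCompact_of_isClosed_isBounded
    · exact isClosed_Icc.preimage continuous_norm
    · apply Metric.isBounded_iff_subset_closedBall (0:ℂ) |>.mpr
      exact ⟨max ρ1 ρ2, fun u hu => by
        simp only [Metric.mem_closedBall, dist_zero_right]
        exact hu.2⟩
  obtain ⟨C, hC⟩ := hKcompact.exists_bound_of_continuousOn
    ((continuousOn_Gf hR'1 hR'le hf).mono hKsub)
  have hC0 : 0 ≤ C := by
    refine le_trans (norm_nonneg (Gf f ((ρ1:ℂ)))) (hC (ρ1:ℂ) ?_)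
    have : ‖(ρ1:ℂ)‖ = ρ1 := by
      rw [Complex.norm_real, Real.norm_eq_abs, _root_.abs_of_nonneg hρ1pos.le]
    exact ⟨by rw [this]; exact h1, by rw [this]; exact le_max_left _ _⟩
  have hFbound : ∀ w ∈ Complex.HadamardThreeLines.verticalClosedStrip 0 1,
      ‖F w‖ ≤ C * |2*π - 0| := by
    intro w hw
    apply intervalIntegral.norm_integral_le_of_norm_le_const
    intro t _
    have hmem : E w * Complex.exp (↑t * Complex.I) ∈ K := by
      have habs : ‖E w * Complex.exp (↑t * Complex.I)‖ =
          Real.exp (d + w.re * c) := by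
        rw [norm_mul, Complex.norm_exp_ofReal_mul_I, mul_one, habsE]
      obtain ⟨hg1, hg2⟩ := hexp_bound w.re hw.1 hw.2
      exact ⟨by rw [habs]; exact hg1, by rw [habs]; exact hg2⟩
    calc ‖Gf f (E w * Complex.exp (↑t * Complex.I)) * ψ t‖
        = ‖Gf f (E w * Complex.exp (↑t * Complex.I))‖ * ‖ψ t‖ := by
          rw [norm_mul]
      _ ≤ C * 1 := mul_le_mul (hC _ hmem) (hψ1 t) (norm_nonneg _) hC0
      _ = C := mul_one C
  have hB : BddAbove ((norm ∘ F) '' (Complex.HadamardThreeLines.verticalClosedStrip 0 1)) := by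
    refine ⟨C * |2*π - 0|, ?_⟩
    rintro y ⟨w, hw, rfl⟩
    exact hFbound w hw
  -- edge bounds
  have hedge : ∀ (ρ0 : ℝ), 1 ≤ ρ0 → ρ0 < R' → ∀ z : ℂ, Real.exp (d + z.re * c) = ρ0 →
      ‖F z‖ ≤ π * Mfun f ρ0 := by
    intro ρ0 hρ01 hρ0lt z hz
    set q0 : ℝ → ℝ := fun t => ‖Gf f ((ρ0:ℂ) * Complex.exp (↑t * Complex.I))‖
      with hq0def
    have hq0cont : Continuous q0 := continuous_absGf_circle hR'1 hR'le hf hρ01 hρ0lt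
    have hMρ0 : π * Mfun f ρ0 = ∫ t in (0:ℝ)..(2*π), q0 t := by
      have : Mfun f ρ0 = (1/π) * ∫ t in (0:ℝ)..(2*π), q0 t := rfl
      rw [this]; field_simp
    have hFz : F z = ∫ t in (0:ℝ)..(2*π),
        Gf f ((ρ0:ℂ) * Complex.exp ((↑(z.im * c + t) : ℂ) * Complex.I)) * ψ t := by
      rw [hFdef, hΦdef]
      simp only
      congr 1
      ext t
      rw [hdecomp z t, hz]
    rw [hFz, hMρ0]
    have hshift : (∫ t in (0:ℝ)..(2*π), q0 (z.im * c + t)) = ∫ t in (0:ℝ)..(2*π), q0 t :=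
      shift_integral q0 (q_periodic f ρ0) (z.im * c)
    rw [← hshift]
    have hint : IntervalIntegrable (fun t => q0 (z.im * c + t)) volume 0 (2*π) :=
      (hq0cont.comp (continuous_const.add continuous_id)).intervalIntegrable _ _
    have hae : ∀ᵐ t ∂(volume.restrict (Set.uIoc (0:ℝ) (2*π))),
        ‖Gf f ((ρ0:ℂ) * Complex.exp ((↑(z.im * c + t) : ℂ) * Complex.I)) * ψ t‖ ≤
          q0 (z.im * c + t) := by
      apply Filter.Eventually.of_forall
      intro t
      calc ‖Gf f ((ρ0:ℂ) * Complex.exp ((↑(z.im * c + t) : ℂ) * Complex.I)) * ψ t‖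
          = q0 (z.im * c + t) * ‖ψ t‖ := by rw [norm_mul]
        _ ≤ q0 (z.im * c + t) * 1 :=
            mul_le_mul_of_nonneg_left (hψ1 t) (norm_nonneg _)
        _ = q0 (z.im * c + t) := mul_one _
    calc ‖∫ t in (0:ℝ)..(2*π),
          Gf f ((ρ0:ℂ) * Complex.exp ((↑(z.im * c + t) : ℂ) * Complex.I)) * ψ t‖
        ≤ |∫ t in (0:ℝ)..(2*π), q0 (z.im * c + t)| :=
          (intervalIntegral.norm_integral_le_of_norm_le (by linarith)
            (((ae_restrict_iff' measurableSet_uIoc).mp hae).mono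
              (fun t ht htI => ht (Set.Ioc_subset_uIoc htI))) hint).trans (le_abs_self _)
      _ = ∫ t in (0:ℝ)..(2*π), q0 (z.im * c + t) := by
          apply _root_.abs_of_nonneg
          exact intervalIntegral.integral_nonneg (by linarith)
            (fun t _ => norm_nonneg _)
  -- value in the middle
  have hmiddle : ‖F (x:ℂ)‖ = π * Mfun f ρ := by
    have hFx : F (x:ℂ) = ∫ t in (0:ℝ)..(2*π),
        Gf f ((ρ:ℂ) * Complex.exp (↑t * Complex.I)) * ψ t := by
      rw [hFdef, hΦdef]
      simp only
      congr 1
      ext t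
      rw [hdecomp (x:ℂ) t]
      simp only [Complex.ofReal_re, Complex.ofReal_im, zero_mul, zero_add]
      rw [← hρeq]
    rw [hFx]
    have : (∫ t in (0:ℝ)..(2*π), Gf f ((ρ:ℂ) * Complex.exp (↑t * Complex.I)) * ψ t) =
        ((∫ t in (0:ℝ)..(2*π), ‖Gf f ((ρ:ℂ) * Complex.exp (↑t * Complex.I))‖ : ℝ) : ℂ) := by
      rw [← intervalIntegral.integral_ofReal]
      congr 1
      ext t
      exact mul_psi f ρ t
    rw [this]
    rw [Complex.norm_real, Real.norm_eq_abs]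
    have hMeq : π * Mfun f ρ =
        ∫ t in (0:ℝ)..(2*π), ‖Gf f ((ρ:ℂ) * Complex.exp (↑t * Complex.I))‖ := by
      have : Mfun f ρ = (1/π) *
          ∫ t in (0:ℝ)..(2*π), ‖Gf f ((ρ:ℂ) * Complex.exp (↑t * Complex.I))‖ := rfl
      rw [this, ← mul_assoc, mul_one_div_cancel hπ.ne', one_mul]
    rw [← hMeq]
    rw [_root_.abs_of_nonneg (mul_nonneg hπ.le (Mfun_nonneg f ρ))]
  -- three lines
  have hz : (x:ℂ) ∈ Complex.HadamardThreeLines.verticalClosedStrip 0 1 := by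
    simp only [Complex.HadamardThreeLines.verticalClosedStrip, Set.mem_preimage,
      Complex.ofReal_re]
    exact ⟨hx0, hx1⟩
  have ha : ∀ z ∈ Complex.re ⁻¹' {(0:ℝ)}, ‖F z‖ ≤ π * Mfun f ρ1 := by
    intro z hz0
    apply hedge ρ1 h1 hρ1lt z
    have : z.re = 0 := hz0
    rw [this]
    simp only [zero_mul, add_zero]
    exact Real.exp_log hρ1pos
  have hb : ∀ z ∈ Complex.re ⁻¹' {(1:ℝ)}, ‖F z‖ ≤ π * Mfun f ρ2 := by
    intro z hz1
    apply hedge ρ2 h2 hρ2lt z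
    have : z.re = 1 := hz1
    rw [this]
    simp only [one_mul, hddef, hcdef]
    rw [show Real.log ρ1 + (Real.log ρ2 - Real.log ρ1) = Real.log ρ2 by ring]
    exact Real.exp_log hρ2pos
  have hthree := Complex.HadamardThreeLines.norm_le_interp_of_mem_verticalClosedStrip'
    zero_lt_one hz hd hB ha hb
  rw [hmiddle, Complex.ofReal_re, sub_zero, sub_zero, div_one] at hthree
  -- conclude
  have hM1 : 0 ≤ Mfun f ρ1 := Mfun_nonneg f ρ1
  have hM2 : 0 ≤ Mfun f ρ2 := Mfun_nonneg f ρ2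
  have hrpoweq : (π * Mfun f ρ1) ^ (1-x) * (π * Mfun f ρ2) ^ x =
      π * (Mfun f ρ1 ^ (1-x) * Mfun f ρ2 ^ x) := by
    rw [Real.mul_rpow hπ.le hM1, Real.mul_rpow hπ.le hM2]
    rw [show π ^ (1-x) * Mfun f ρ1 ^ (1-x) * (π ^ x * Mfun f ρ2 ^ x) =
      (π ^ (1-x) * π ^ x) * (Mfun f ρ1 ^ (1-x) * Mfun f ρ2 ^ x) by ring]
    rw [← Real.rpow_add hπ, sub_add_cancel, Real.rpow_one]
  rw [hrpoweq] at hthree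
  exact le_of_mul_le_mul_left hthree hπ

/-- if f is not identically zero, log M(ρ) is a convex function
of log ρ, i.e. s ↦ log M(eˢ) is convex on [0, log R). -/
theorem log_Mfun_convex
    (R : EReal) (hR : 1 < R) (f : ℂ → ℂ)
    (hf : ∀ z ∈ ellipseRegion R, AnalyticAt ℂ f z)
    (hne : ∃ z ∈ ellipseRegion R, f z ≠ 0) :
    ConvexOn ℝ {s : ℝ | 0 ≤ s ∧ ((Real.exp s : ℝ) : EReal) < R}
      (fun s => Real.log (Mfun f (Real.exp s))) := by
  constructor
  · refine Set.OrdConnected.convex ⟨?_⟩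
    intro s1 hs1 s2 hs2 z hz
    refine ⟨le_trans hs1.1 hz.1, lt_of_le_of_lt ?_ hs2.2⟩
    exact EReal.coe_le_coe_iff.mpr (Real.exp_le_exp.mpr hz.2)
  · intro s1 hs1 s2 hs2 a b ha hb hab
    simp only [smul_eq_mul]
    set ρ1 : ℝ := Real.exp s1 with hρ1def
    set ρ2 : ℝ := Real.exp s2 with hρ2def
    have h1 : 1 ≤ ρ1 := Real.one_le_exp hs1.1
    have h2 : 1 ≤ ρ2 := Real.one_le_exp hs2.1
    have hR1 : (ρ1 : EReal) < R := hs1.2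
    have hR2 : (ρ2 : EReal) < R := hs2.2
    have hab' : a = 1 - b := by linarith
    have hρexp : Real.exp (a * s1 + b * s2) = ρ1 ^ (1-b) * ρ2 ^ b := by
      rw [Real.exp_add, mul_comm a s1, mul_comm b s2, Real.exp_mul, Real.exp_mul, hab']
    have hkey := key hR hf h1 h2 hR1 hR2 hb (by linarith : b ≤ 1)
    rw [← hρexp] at hkey
    -- positivity
    have hM1 : 0 < Mfun f ρ1 := Mfun_pos hR hf hne h1 hR1
    have hM2 : 0 < Mfun f ρ2 := Mfun_pos hR hf hne h2 hR2
    have hmidR : ((Real.exp (a * s1 + b * s2) : ℝ) : EReal) < R := by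
      rcases le_total s1 s2 with h | h
      · refine lt_of_le_of_lt ?_ hs2.2
        apply EReal.coe_le_coe_iff.mpr
        apply Real.exp_le_exp.mpr
        have h3 : a * s1 ≤ a * s2 := mul_le_mul_of_nonneg_left h ha
        have h4 : a * s2 + b * s2 = s2 := by rw [← add_mul, hab, one_mul]
        linarith
      · refine lt_of_le_of_lt ?_ hs1.2
        apply EReal.coe_le_coe_iff.mpr
        apply Real.exp_le_exp.mpr
        have h3 : b * s2 ≤ b * s1 := mul_le_mul_of_nonneg_left h hb
        have h4 : a * s1 + b * s1 = s1 := by rw [← add_mul, hab, one_mul]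
        linarith
    have hmid1 : 1 ≤ Real.exp (a * s1 + b * s2) :=
      Real.one_le_exp (by nlinarith [mul_nonneg ha hs1.1, mul_nonneg hb hs2.1])
    have hMmid : 0 < Mfun f (Real.exp (a * s1 + b * s2)) := Mfun_pos hR hf hne hmid1 hmidR
    calc Real.log (Mfun f (Real.exp (a * s1 + b * s2)))
        ≤ Real.log (Mfun f ρ1 ^ (1-b) * Mfun f ρ2 ^ b) := Real.log_le_log hMmid hkey
      _ = (1-b) * Real.log (Mfun f ρ1) + b * Real.log (Mfun f ρ2) := by
          rw [Real.log_mul (ne_of_gt (Real.rpow_pos_of_pos hM1 _))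
            (ne_of_gt (Real.rpow_pos_of_pos hM2 _)),
            Real.log_rpow hM1, Real.log_rpow hM2]
      _ = a * Real.log (Mfun f ρ1) + b * Real.log (Mfun f ρ2) := by rw [hab']
end
end

section
/- Let 1 < R ≤ ∞, let f be analytic in every ellipse E_ρ with 1 ≤ ρ < R (i.e., f is analytic on the open region ∪_{1≤ρ<R} D̄_ρ), suppose f is not constant, and let n ≥ 0 be such that the Chebyshev coefficient a_n is nonzero. Then the condition number κ(n,ρ) = M(ρ)/(|a_n| ρ^n) is continuously differentiable in ρ on (1, R), and log κ(n,ρ) is a convex function of log ρ, i.e., s ↦ log κ(n, e^s) is convex on (0, log R). -/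
open Complex Real MeasureTheory Polynomial

noncomputable section

open Topology Filter

namespace CondKappa

def Jmap : ℂ → ℂ := fun u => (u + u⁻¹) / 2
def circ (r θ : ℝ) : ℂ := (r : ℂ) * Complex.exp (θ * Complex.I)
def gmap (f : ℂ → ℂ) : ℂ → ℂ := fun u => f (Jmap u)
def annR (R : EReal) : Set ℂ := {u : ℂ | 1 < ‖u‖ ∧ (‖u‖ : EReal) < R}
def symAnn (R : EReal) : Set ℂ :=
  {u : ℂ | u ≠ 0 ∧ (‖u‖ : EReal) < R ∧ (((‖u‖)⁻¹ : ℝ) : EReal) < R}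

lemma joukowski_eq (r θ : ℝ) : joukowski r θ = Jmap (circ r θ) := rfl

lemma abs_circ (r θ : ℝ) : ‖circ r θ‖ = |r| := by
  simp [circ, Complex.norm_exp]

lemma circ_ne_zero {r : ℝ} (hr : 0 < r) (θ : ℝ) : circ r θ ≠ 0 := by
  intro h
  have := abs_circ r θ
  rw [h, norm_zero] at this
  rw [abs_of_pos hr] at this
  exact hr.ne' this.symm

lemma continuous_circ : Continuous fun p : ℝ × ℝ => circ p.1 p.2 := by
  exact (Complex.continuous_ofReal.comp continuous_fst).mul
    (Complex.continuous_exp.comp ((Complex.continuous_ofReal.comp continuous_snd).mul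
      continuous_const))

lemma continuous_circ_theta (r : ℝ) : Continuous fun θ : ℝ => circ r θ :=
  continuous_circ.comp (Continuous.prodMk_right r)

lemma circ_add_two_pi (r θ : ℝ) : circ r (θ + 2 * π) = circ r θ := by
  unfold circ
  congr 1
  rw [Complex.ofReal_add, add_mul, Complex.exp_add]
  rw [show ((2 * π : ℝ) : ℂ) * I = 2 * ↑π * I by push_cast; ring, Complex.exp_two_pi_mul_I,
    mul_one]

lemma isOpen_annR (R : EReal) : IsOpen (annR R) := by
  have h1 : IsOpen {u : ℂ | 1 < ‖u‖} :=
    isOpen_lt continuous_const continuous_norm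
  have h2 : IsOpen {u : ℂ | (‖u‖ : EReal) < R} :=
    isOpen_lt (continuous_coe_real_ereal.comp continuous_norm) continuous_const
  exact h1.inter h2

lemma isPreconnected_annR (R : EReal) : IsPreconnected (annR R) := by
  have hconv : Convex ℝ {p : ℝ × ℝ | 1 < p.1 ∧ (p.1 : EReal) < R} := by
    have he : {p : ℝ × ℝ | 1 < p.1 ∧ (p.1 : EReal) < R}
        = {r : ℝ | 1 < r ∧ (r : EReal) < R} ×ˢ (Set.univ : Set ℝ) := by
      ext p; simp [Set.mem_prod]
    rw [he]
    refine Convex.prod ?_ convex_univ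
    have hoc : Set.OrdConnected {r : ℝ | 1 < r ∧ (r : EReal) < R} := by
      constructor
      rintro x ⟨hx1, hx2⟩ y ⟨hy1, hy2⟩ z ⟨hz1, hz2⟩
      exact ⟨lt_of_lt_of_le hx1 hz1, lt_of_le_of_lt (EReal.coe_le_coe_iff.2 hz2) hy2⟩
    exact hoc.convex
  have himage : annR R = (fun p : ℝ × ℝ => circ p.1 p.2) '' {p | 1 < p.1 ∧ (p.1 : EReal) < R} := by
    ext u
    constructor
    · rintro ⟨h1, h2⟩
      exact ⟨(‖u‖, Complex.arg u), ⟨h1, h2⟩,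
        by simp [circ, Complex.norm_mul_exp_arg_mul_I]⟩
    · rintro ⟨p, ⟨h1, h2⟩, rfl⟩
      constructor
      · rw [abs_circ, abs_of_pos (zero_lt_one.trans h1)]; exact h1
      · rw [abs_circ, abs_of_pos (zero_lt_one.trans h1)]; exact h2
  rw [himage]
  exact (hconv.isPreconnected).image _ continuous_circ.continuousOn

lemma analyticAt_Jmap {u : ℂ} (hu : u ≠ 0) : AnalyticAt ℂ Jmap u := by
  unfold Jmap
  exact ((analyticAt_id.add (analyticAt_id.inv hu)).div analyticAt_const two_ne_zero)

lemma hasDerivAt_Jmap {u : ℂ} (hu : u ≠ 0) :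
    HasDerivAt Jmap ((1 + -(u ^ 2)⁻¹) / 2) u := by
  exact ((hasDerivAt_id u).add (hasDerivAt_inv hu)).div_const 2

lemma Jmap_not_const {u₀ : ℂ} (hu : u₀ ≠ 0) (h : ∀ᶠ w in 𝓝 u₀, Jmap w = Jmap u₀) : False := by
  obtain ⟨ε, hε, hball⟩ := Metric.eventually_nhds_iff_ball.1 h
  have hdense : Dense ({(0 : ℂ), 1, -1} : Set ℂ)ᶜ := by
    apply Set.Countable.dense_compl ℂ
    exact (Set.toFinite _).countable
  obtain ⟨w, hw1, hw2⟩ := hdense.exists_mem_open Metric.isOpen_ball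
    (Metric.nonempty_ball.2 hε)
  simp only [Set.mem_compl_iff, Set.mem_insert_iff, Set.mem_singleton_iff, not_or] at hw1
  obtain ⟨hw0, hwone, hwnegone⟩ := hw1
  have hconst : Jmap =ᶠ[𝓝 w] fun _ => Jmap u₀ := by
    filter_upwards [Metric.isOpen_ball.mem_nhds hw2] with x hx using hball x hx
  have hd0 : deriv Jmap w = 0 := by
    rw [hconst.deriv_eq]; exact deriv_const _ _
  have hd : deriv Jmap w = (1 + -(w ^ 2)⁻¹) / 2 := (hasDerivAt_Jmap hw0).deriv
  rw [hd0] at hd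
  have hw2one : w ^ 2 = 1 := by
    field_simp at hd
    linear_combination -hd
  have := mul_eq_zero.1 (show (w - 1) * (w + 1) = 0 by linear_combination hw2one)
  rcases this with h1 | h1
  · exact hwone (by linear_combination h1)
  · exact hwnegone (by linear_combination h1)

end CondKappa

section Chunk2
open Topology Filter Metric

namespace CondKappa

variable {R : EReal} {f : ℂ → ℂ}

lemma Jmap_inv (u : ℂ) : Jmap u⁻¹ = Jmap u := by
  unfold Jmap; rw [inv_inv, add_comm]

lemma joukowski_mem_region {r : ℝ} (h1 : 1 ≤ r) (h2 : (r : EReal) < R) (θ : ℝ) :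
    joukowski r θ ∈ ellipseRegion R := ⟨r, θ, h1, h2, rfl⟩

lemma isOpen_symAnn (R : EReal) : IsOpen (symAnn R) := by
  have h0 : IsOpen {u : ℂ | u ≠ 0} := isOpen_compl_singleton
  have h1 : IsOpen {u : ℂ | (‖u‖ : EReal) < R} :=
    isOpen_lt (continuous_coe_real_ereal.comp continuous_norm) continuous_const
  have hco : ContinuousOn (fun u : ℂ => (((‖u‖)⁻¹ : ℝ) : EReal)) {u : ℂ | u ≠ 0} := by
    apply continuous_coe_real_ereal.comp_continuousOn
    exact continuous_norm.continuousOn.inv₀ fun u hu => norm_ne_zero_iff.mpr hu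
  have h2 : IsOpen ({u : ℂ | u ≠ 0} ∩
      (fun u : ℂ => (((‖u‖)⁻¹ : ℝ) : EReal)) ⁻¹' Set.Iio R) :=
    hco.isOpen_inter_preimage h0 isOpen_Iio
  have : symAnn R = ({u : ℂ | u ≠ 0} ∩ {u : ℂ | (‖u‖ : EReal) < R}) ∩
      ({u : ℂ | u ≠ 0} ∩
        (fun u : ℂ => (((‖u‖)⁻¹ : ℝ) : EReal)) ⁻¹' Set.Iio R) := by
    ext u
    simp only [symAnn, Set.mem_setOf_eq, Set.mem_inter_iff, Set.mem_preimage, Set.mem_Iio]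
    tauto
  rw [this]
  exact (h0.inter h1).inter h2

lemma region_eq_image (hR : 1 < R) : ellipseRegion R = Jmap '' symAnn R := by
  ext z
  constructor
  · rintro ⟨r, θ, h1, h2, rfl⟩
    have hrpos : (0 : ℝ) < r := lt_of_lt_of_le zero_lt_one h1
    refine ⟨circ r θ, ⟨circ_ne_zero hrpos θ, ?_, ?_⟩, rfl⟩
    · rw [abs_circ, abs_of_pos hrpos]; exact h2
    · rw [abs_circ, abs_of_pos hrpos]
      refine lt_of_le_of_lt ?_ hR
      rw [show (1 : EReal) = ((1 : ℝ) : EReal) by rfl, EReal.coe_le_coe_iff]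
      exact inv_le_one_of_one_le₀ h1
  · rintro ⟨u, ⟨hu0, hu1, hu2⟩, rfl⟩
    have habs : 0 < ‖u‖ := norm_pos_iff.mpr hu0
    rcases le_or_gt 1 (‖u‖) with hge | hlt
    · refine ⟨‖u‖, Complex.arg u, hge, hu1, ?_⟩
      rw [joukowski_eq]
      congr 1
      simp [circ, Complex.norm_mul_exp_arg_mul_I]
    · refine ⟨(‖u‖)⁻¹, Complex.arg u⁻¹, ?_, ?_, ?_⟩
      · exact (one_le_inv₀ habs).2 hlt.le
      · exact hu2
      · rw [joukowski_eq, ← Jmap_inv u]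
        congr 1
        have : ‖u⁻¹‖ = (‖u‖)⁻¹ := norm_inv _
        rw [circ, ← this, Complex.norm_mul_exp_arg_mul_I]

lemma isOpen_region (hR : 1 < R) : IsOpen (ellipseRegion R) := by
  rw [region_eq_image hR, isOpen_iff_mem_nhds]
  rintro z ⟨u, hu, rfl⟩
  rcases (analyticAt_Jmap hu.1).eventually_constant_or_nhds_le_map_nhds with h | h
  · exact absurd h (fun hh => Jmap_not_const hu.1 hh)
  · exact h (Filter.image_mem_map ((isOpen_symAnn R).mem_nhds hu))

lemma isPreconnected_region (hR : 1 < R) : IsPreconnected (ellipseRegion R) := by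
  have hconv : Convex ℝ {p : ℝ × ℝ | 1 ≤ p.1 ∧ (p.1 : EReal) < R} := by
    have he : {p : ℝ × ℝ | 1 ≤ p.1 ∧ (p.1 : EReal) < R}
        = {r : ℝ | 1 ≤ r ∧ (r : EReal) < R} ×ˢ (Set.univ : Set ℝ) := by
      ext p; simp [Set.mem_prod]
    rw [he]
    refine Convex.prod ?_ convex_univ
    have hoc : Set.OrdConnected {r : ℝ | 1 ≤ r ∧ (r : EReal) < R} := by
      constructor
      rintro x ⟨hx1, hx2⟩ y ⟨hy1, hy2⟩ z ⟨hz1, hz2⟩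
      exact ⟨le_trans hx1 hz1, lt_of_le_of_lt (EReal.coe_le_coe_iff.2 hz2) hy2⟩
    exact hoc.convex
  have hcont : ContinuousOn (fun p : ℝ × ℝ => joukowski p.1 p.2)
      {p : ℝ × ℝ | 1 ≤ p.1 ∧ (p.1 : EReal) < R} := by
    have hne : ∀ p ∈ {p : ℝ × ℝ | 1 ≤ p.1 ∧ (p.1 : EReal) < R}, circ p.1 p.2 ≠ 0 :=
      fun p hp => circ_ne_zero (lt_of_lt_of_le zero_lt_one hp.1) _
    have : (fun p : ℝ × ℝ => joukowski p.1 p.2)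
        = fun p : ℝ × ℝ => (circ p.1 p.2 + (circ p.1 p.2)⁻¹) / 2 := rfl
    rw [this]
    exact ((continuous_circ.continuousOn.add
      (continuous_circ.continuousOn.inv₀ hne)).div_const 2)
  have himage : ellipseRegion R
      = (fun p : ℝ × ℝ => joukowski p.1 p.2) '' {p : ℝ × ℝ | 1 ≤ p.1 ∧ (p.1 : EReal) < R} := by
    ext z
    constructor
    · rintro ⟨r, θ, h1, h2, rfl⟩; exact ⟨(r, θ), ⟨h1, h2⟩, rfl⟩
    · rintro ⟨p, ⟨h1, h2⟩, rfl⟩; exact ⟨p.1, p.2, h1, h2, rfl⟩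
  rw [himage]
  exact hconv.isPreconnected.image _ hcont

lemma joukowski_one (θ : ℝ) : joukowski 1 θ = Complex.cos θ := by
  unfold joukowski Complex.cos
  rw [Complex.ofReal_one, one_mul, ← Complex.exp_neg, neg_mul]

lemma ofReal_mem_region (hR : 1 < R) {x : ℝ} (hx1 : -1 ≤ x) (hx2 : x ≤ 1) :
    (x : ℂ) ∈ ellipseRegion R := by
  refine ⟨1, Real.arccos x, le_refl 1, ?_, ?_⟩
  · rw [show ((1 : ℝ) : EReal) = (1 : EReal) by rfl]; exact hR
  · rw [joukowski_one, ← Complex.ofReal_cos, Real.cos_arccos hx1 hx2]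

lemma chebCoeff_ne_zero_false (hR : 1 < R) {n : ℕ} (han : chebCoeffT f n ≠ 0)
    (hzero : Set.EqOn f 0 (ellipseRegion R)) : False := by
  apply han
  unfold chebCoeffT
  rw [show (∫ x in (-1:ℝ)..1,
      f x * ((Polynomial.Chebyshev.T ℝ n).eval x / Real.sqrt (1 - x ^ 2) : ℝ)) = 0 from ?_,
    mul_zero]
  rw [← intervalIntegral.integral_zero (a := (-1:ℝ)) (b := (1:ℝ)) (E := ℂ)]
  apply intervalIntegral.integral_congr
  intro x hx
  rw [Set.uIcc_of_le (by norm_num : (-1:ℝ) ≤ 1)] at hx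
  have : f x = 0 := hzero (ofReal_mem_region hR hx.1 hx.2)
  simp [this]

lemma analyticOnNhd_gmap (hR : 1 < R)
    (hf : ∀ z ∈ ellipseRegion R, AnalyticAt ℂ f z) :
    AnalyticOnNhd ℂ (gmap f) (annR R) := by
  intro u hu
  have hu0 : u ≠ 0 := by
    intro h
    have h1 := hu.1
    rw [h, norm_zero] at h1
    exact absurd h1 (by norm_num)
  have hmem : Jmap u ∈ ellipseRegion R := by
    refine ⟨‖u‖, Complex.arg u, hu.1.le, hu.2, ?_⟩
    rw [joukowski_eq]
    congr 1
    simp [circ, Complex.norm_mul_exp_arg_mul_I]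
  exact (hf _ hmem).comp (analyticAt_Jmap hu0)

/-- If `gmap f` vanishes identically on the annulus, we get a contradiction with `aₙ ≠ 0`. -/
lemma gmap_eqOn_zero_false (hR : 1 < R)
    (hf : ∀ z ∈ ellipseRegion R, AnalyticAt ℂ f z) {n : ℕ} (han : chebCoeffT f n ≠ 0)
    (hg0 : Set.EqOn (gmap f) 0 (annR R)) : False := by
  obtain ⟨c, h1c, hcR⟩ := exists_between hR
  have hcT : c ≠ ⊤ := (lt_of_lt_of_le hcR le_top).ne
  have hcB : c ≠ ⊥ := ne_bot_of_gt h1c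
  set r₀ : ℝ := c.toReal with hr₀
  have hcoe : ((r₀ : ℝ) : EReal) = c := EReal.coe_toReal hcT hcB
  have h1r : 1 < r₀ := by
    rw [show (1 : EReal) = ((1:ℝ) : EReal) by rfl, ← hcoe] at h1c
    exact_mod_cast h1c
  have hrR : ((r₀ : ℝ) : EReal) < R := by rw [hcoe]; exact hcR
  have hu₀ : ((r₀ : ℝ) : ℂ) ∈ annR R := by
    constructor <;> simp only [Complex.norm_real, Real.norm_eq_abs, abs_of_pos (lt_trans zero_lt_one h1r),
      Set.mem_setOf_eq]
    · exact h1r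
    · exact hrR
  have hu₀0 : ((r₀ : ℝ) : ℂ) ≠ 0 := by
    simpa using (lt_trans zero_lt_one h1r).ne'
  -- f vanishes on a neighborhood of z₀ = Jmap r₀
  have hev : ∀ᶠ z in 𝓝 (Jmap ((r₀ : ℝ) : ℂ)), f z = 0 := by
    rcases (analyticAt_Jmap hu₀0).eventually_constant_or_nhds_le_map_nhds with h | h
    · exact absurd h (fun hh => Jmap_not_const hu₀0 hh)
    · apply h
      rw [Filter.mem_map]
      filter_upwards [(isOpen_annR R).mem_nhds hu₀] with u hu using hg0 hu
  have hz₀mem : Jmap ((r₀ : ℝ) : ℂ) ∈ ellipseRegion R := by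
    refine ⟨r₀, 0, h1r.le, hrR, ?_⟩
    rw [joukowski_eq]
    congr 1
    simp [circ]
  have hfreq : ∃ᶠ z in 𝓝[≠] (Jmap ((r₀ : ℝ) : ℂ)), f z = 0 :=
    (hev.filter_mono nhdsWithin_le_nhds).frequently
  have : Set.EqOn f 0 (ellipseRegion R) :=
    AnalyticOnNhd.eqOn_zero_of_preconnected_of_frequently_eq_zero
      (fun z hz => hf z hz) (isPreconnected_region hR) hz₀mem hfreq
  exact chebCoeff_ne_zero_false hR han this

end CondKappa
end Chunk2

section Chunk3
open Topology Filter Metric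

namespace CondKappa

variable {R : EReal} {f : ℂ → ℂ}

lemma circ_fiber_countable {r : ℝ} (hr : r ≠ 0) (u : ℂ) :
    Set.Countable {θ : ℝ | circ r θ = u} := by
  rcases Set.eq_empty_or_nonempty {θ : ℝ | circ r θ = u} with h | ⟨θ₀, hθ₀⟩
  · rw [h]; exact Set.countable_empty
  · apply Set.Countable.mono ?_ (Set.countable_range fun n : ℤ => θ₀ + n * (2 * π))
    intro θ hθ
    have h1 : circ r θ = circ r θ₀ := by
      rw [Set.mem_setOf_eq] at hθ hθ₀; rw [hθ, hθ₀]
    have h2 : Complex.exp (θ * Complex.I) = Complex.exp (θ₀ * Complex.I) :=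
      mul_left_cancel₀ (Complex.ofReal_ne_zero.2 hr) h1
    obtain ⟨m, hm⟩ := Complex.exp_eq_exp_iff_exists_int.1 h2
    have h3 : (θ : ℂ) * Complex.I = ((θ₀ + m * (2 * π) : ℝ) : ℂ) * Complex.I := by
      push_cast
      linear_combination hm
    have h4 : (θ : ℂ) = ((θ₀ + m * (2 * π) : ℝ) : ℂ) :=
      mul_right_cancel₀ Complex.I_ne_zero h3
    exact ⟨m, (Complex.ofReal_inj.1 h4).symm⟩

/-- For each admissible radius, the set of angles where `gmap f` vanishes on the circle
is countable. -/
lemma zero_theta_countable (hR : 1 < R)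
    (hf : ∀ z ∈ ellipseRegion R, AnalyticAt ℂ f z) {n : ℕ} (han : chebCoeffT f n ≠ 0)
    {r : ℝ} (h1r : 1 < r) (hrR : (r : EReal) < R) :
    Set.Countable {θ : ℝ | gmap f (circ r θ) = 0} := by
  have hg := analyticOnNhd_gmap hR hf
  set S : Set ℂ := {u : ℂ | ‖u‖ = r ∧ gmap f u = 0} with hS
  have hsub : S ⊆ Metric.sphere (0 : ℂ) r := by
    rintro u ⟨h1, _⟩
    rw [mem_sphere_zero_iff_norm]
    exact h1
  have hSfin : S.Finite := by
    by_contra hinf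
    obtain ⟨x, hxs, hacc⟩ := Set.Infinite.exists_accPt_of_subset_isCompact hinf
      (isCompact_sphere (0:ℂ) r) hsub
    have hxA : x ∈ annR R := by
      rw [mem_sphere_zero_iff_norm] at hxs
      constructor
      · show 1 < ‖x‖
        rw [hxs]; exact h1r
      · show (‖x‖ : EReal) < R
        rw [hxs]; exact hrR
    have hfreq : ∃ᶠ y in 𝓝[≠] x, gmap f y = 0 := by
      have h1 := accPt_iff_frequently.1 hacc
      rw [frequently_nhdsWithin_iff]
      exact h1.mono fun y hy => ⟨hy.2.2, hy.1⟩
    exact gmap_eqOn_zero_false hR hf han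
      (AnalyticOnNhd.eqOn_zero_of_preconnected_of_frequently_eq_zero hg
        (isPreconnected_annR R) hxA hfreq)
  have hrpos : (0:ℝ) < r := lt_trans zero_lt_one h1r
  have hcover : {θ : ℝ | gmap f (circ r θ) = 0} ⊆ ⋃ u ∈ S, {θ : ℝ | circ r θ = u} := by
    intro θ hθ
    refine Set.mem_biUnion (?_ : circ r θ ∈ S) rfl
    exact ⟨by rw [abs_circ, abs_of_pos hrpos], hθ⟩
  exact Set.Countable.mono hcover
    (Set.Countable.biUnion hSfin.countable fun u _ => circ_fiber_countable hrpos.ne' u)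

/-- Derivative of `t ↦ |c t|` at a point where `c` does not vanish. -/
lemma hasDerivAt_cabs {c : ℝ → ℂ} {c' : ℂ} {r : ℝ} (hc : HasDerivAt c c' r)
    (h0 : c r ≠ 0) :
    HasDerivAt (fun t => ‖c t‖)
      (((starRingEnd ℂ) (c r) * c').re / ‖c r‖) r := by
  have hre : HasDerivAt (fun t => (c t).re) c'.re r :=
    Complex.reCLM.hasFDerivAt.comp_hasDerivAt r hc
  have him : HasDerivAt (fun t => (c t).im) c'.im r :=
    Complex.imCLM.hasFDerivAt.comp_hasDerivAt r hc
  have hq : HasDerivAt (fun t => (c t).re ^ 2 + (c t).im ^ 2)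
      (2 * (c r).re * c'.re + 2 * (c r).im * c'.im) r := by
    have h1 := hre.pow 2
    have h2 := him.pow 2
    norm_num at h1 h2
    exact h1.add h2
  have hq0 : (c r).re ^ 2 + (c r).im ^ 2 ≠ 0 := by
    intro h
    apply h0
    apply Complex.normSq_eq_zero.1
    rw [Complex.normSq_apply]
    linear_combination h
  have hs := hq.sqrt hq0
  have heq : (fun t => ‖c t‖) = fun t => √((c t).re ^ 2 + (c t).im ^ 2) := by
    funext t
    rw [Complex.norm_def, Complex.normSq_apply]
    ring_nf
  have habs : ‖c r‖ = √((c r).re ^ 2 + (c r).im ^ 2) := by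
    rw [Complex.norm_def, Complex.normSq_apply]; ring_nf
  rw [heq]
  convert hs using 1
  have habs0 : ‖c r‖ ≠ 0 := norm_ne_zero_iff.mpr h0
  rw [Complex.mul_re, Complex.conj_re, Complex.conj_im, ← habs]
  field_simp
  ring
  
lemma abs_circ_of_pos {r : ℝ} (hr : 0 < r) (θ : ℝ) : ‖circ r θ‖ = r := by
  rw [abs_circ, abs_of_pos hr]

lemma circ_mem_annR {r : ℝ} (h1r : 1 < r) (hrR : (r : EReal) < R) (θ : ℝ) :
    circ r θ ∈ annR R := by
  have h := abs_circ_of_pos (lt_trans zero_lt_one h1r) θ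
  constructor
  · show 1 < ‖circ r θ‖
    rw [h]; exact h1r
  · show (‖circ r θ‖ : EReal) < R
    rw [h]; exact hrR

lemma continuous_gcirc (hg : AnalyticOnNhd ℂ (gmap f) (annR R)) {r : ℝ}
    (h1r : 1 < r) (hrR : (r : EReal) < R) :
    Continuous fun θ : ℝ => gmap f (circ r θ) := by
  rw [continuous_iff_continuousAt]
  intro θ
  exact ((hg _ (circ_mem_annR h1r hrR θ)).continuousAt).comp
    (continuous_circ_theta r).continuousAt

lemma Mfun_eq (f : ℂ → ℂ) (r : ℝ) :
    Mfun f r = (1 / π) * ∫ θ in (0:ℝ)..(2 * π), ‖gmap f (circ r θ)‖ := rfl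

lemma Mfun_nonneg (f : ℂ → ℂ) (r : ℝ) : 0 ≤ Mfun f r := by
  rw [Mfun_eq]
  apply mul_nonneg (by positivity)
  apply intervalIntegral.integral_nonneg (by positivity)
  intro x _
  exact norm_nonneg _

lemma Mfun_pos (hR : 1 < R)
    (hf : ∀ z ∈ ellipseRegion R, AnalyticAt ℂ f z) {n : ℕ} (han : chebCoeffT f n ≠ 0)
    {r : ℝ} (h1r : 1 < r) (hrR : (r : EReal) < R) : 0 < Mfun f r := by
  have hg := analyticOnNhd_gmap hR hf
  rw [Mfun_eq]
  apply mul_pos (by positivity)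
  rw [intervalIntegral.integral_of_le (by positivity : (0:ℝ) ≤ 2 * π)]
  set Z := {θ : ℝ | gmap f (circ r θ) = 0} with hZ
  have hZ0 : volume Z = 0 :=
    (zero_theta_countable hR hf han h1r hrR).measure_zero _
  have hcont : Continuous fun θ : ℝ => ‖gmap f (circ r θ)‖ :=
    continuous_norm.comp (continuous_gcirc hg h1r hrR)
  rw [MeasureTheory.setIntegral_pos_iff_support_of_nonneg_ae]
  · have hsub : Set.Ioc (0:ℝ) (2*π) \ Z ⊆
        (Function.support fun θ => ‖gmap f (circ r θ)‖) ∩ Set.Ioc 0 (2*π) := by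
      rintro θ ⟨hθ1, hθ2⟩
      refine ⟨?_, hθ1⟩
      rw [Function.mem_support]
      exact fun h => hθ2 (norm_eq_zero.1 h)
    calc (0:ENNReal) < volume (Set.Ioc (0:ℝ) (2*π) \ Z) := by
          rw [measure_diff_null hZ0, Real.volume_Ioc]
          apply ENNReal.ofReal_pos.2
          rw [sub_zero]
          positivity
      _ ≤ _ := measure_mono hsub
  · exact Filter.Eventually.of_forall fun θ => norm_nonneg _
  · exact hcont.integrableOn_Ioc

end CondKappa
end Chunk3

section Chunk4
open Topology Filter Metric intervalIntegral

namespace CondKappa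

variable {R : EReal} {f : ℂ → ℂ}

/-- The pointwise derivative integrand. -/
def phi (f : ℂ → ℂ) (r θ : ℝ) : ℝ :=
  ((starRingEnd ℂ) (gmap f (circ r θ)) *
      (deriv (gmap f) (circ r θ) * Complex.exp (θ * Complex.I))).re
    / ‖gmap f (circ r θ)‖

lemma exists_real_between {x : ℝ} (h : (x : EReal) < R) :
    ∃ q : ℝ, x < q ∧ (q : EReal) < R := by
  obtain ⟨c, h1, h2⟩ := exists_between h
  have hcT : c ≠ ⊤ := (lt_of_lt_of_le h2 le_top).ne
  have hcB : c ≠ ⊥ := ne_bot_of_gt h1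
  have hcoe : ((c.toReal : ℝ) : EReal) = c := EReal.coe_toReal hcT hcB
  refine ⟨c.toReal, ?_, ?_⟩
  · rw [← hcoe] at h1; exact_mod_cast h1
  · rw [hcoe]; exact h2

lemma hasDerivAt_gcirc (hg : AnalyticOnNhd ℂ (gmap f) (annR R)) {r θ : ℝ}
    (hmem : circ r θ ∈ annR R) :
    HasDerivAt (fun t : ℝ => gmap f (circ t θ))
      (deriv (gmap f) (circ r θ) * Complex.exp (θ * Complex.I)) r := by
  have hd : HasDerivAt (gmap f) (deriv (gmap f) (circ r θ)) (circ r θ) :=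
    ((hg _ hmem).differentiableAt).hasDerivAt
  have hmul : HasDerivAt (fun z : ℂ => z * Complex.exp (θ * Complex.I))
      (Complex.exp (θ * Complex.I)) ((r : ℝ) : ℂ) := hasDerivAt_mul_const _
  have hcomp := (hd.comp ((r : ℝ) : ℂ) hmul).comp_ofReal
  exact hcomp

lemma continuous_exp_theta : Continuous fun θ : ℝ => Complex.exp (θ * Complex.I) :=
  Complex.continuous_exp.comp (Complex.continuous_ofReal.mul continuous_const)

lemma continuous_deriv_gcirc (hg : AnalyticOnNhd ℂ (gmap f) (annR R)) {r : ℝ}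
    (h1r : 1 < r) (hrR : (r : EReal) < R) :
    Continuous fun θ : ℝ => deriv (gmap f) (circ r θ) := by
  rw [continuous_iff_continuousAt]
  intro θ
  exact ((hg.deriv _ (circ_mem_annR h1r hrR θ)).continuousAt).comp
    (continuous_circ_theta r).continuousAt

lemma phi_measurable (hg : AnalyticOnNhd ℂ (gmap f) (annR R)) {r : ℝ}
    (h1r : 1 < r) (hrR : (r : EReal) < R) :
    AEStronglyMeasurable (phi f r) (volume.restrict (Set.uIoc (0:ℝ) (2*π))) := by
  have hgc := continuous_gcirc hg h1r hrR
  have hnum : Continuous fun θ : ℝ => ((starRingEnd ℂ) (gmap f (circ r θ)) *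
      (deriv (gmap f) (circ r θ) * Complex.exp (θ * Complex.I))).re :=
    Complex.continuous_re.comp ((Complex.continuous_conj.comp hgc).mul
      ((continuous_deriv_gcirc hg h1r hrR).mul continuous_exp_theta))
  have hden : Continuous fun θ : ℝ => ‖gmap f (circ r θ)‖ :=
    continuous_norm.comp hgc
  exact (hnum.measurable.div hden.measurable).aestronglyMeasurable

lemma phi_bound (hg : AnalyticOnNhd ℂ (gmap f) (annR R)) {r θ : ℝ} {C : ℝ}
    (hC0 : 0 ≤ C) (hC : ‖deriv (gmap f) (circ r θ)‖ ≤ C) :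
    ‖phi f r θ‖ ≤ C := by
  unfold phi
  rcases eq_or_ne (‖gmap f (circ r θ)‖) 0 with h | h
  · rw [h, div_zero, norm_zero]; exact hC0
  · have hpos : 0 < ‖gmap f (circ r θ)‖ :=
      lt_of_le_of_ne (norm_nonneg _) (Ne.symm h)
    rw [Real.norm_eq_abs, abs_div, abs_of_pos hpos, div_le_iff₀ hpos]
    calc |((starRingEnd ℂ) (gmap f (circ r θ)) *
        (deriv (gmap f) (circ r θ) * Complex.exp (θ * Complex.I))).re|
        ≤ ‖(starRingEnd ℂ) (gmap f (circ r θ)) *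
          (deriv (gmap f) (circ r θ) * Complex.exp (θ * Complex.I))‖ := Complex.abs_re_le_norm _
      _ = ‖gmap f (circ r θ)‖ *
          (‖deriv (gmap f) (circ r θ)‖ * 1) := by
          rw [norm_mul, norm_mul, Complex.norm_conj, Complex.norm_exp_ofReal_mul_I]
      _ ≤ ‖gmap f (circ r θ)‖ * C := by
          apply mul_le_mul_of_nonneg_left _ (norm_nonneg _)
          rw [mul_one]
          exact hC
      _ = C * ‖gmap f (circ r θ)‖ := mul_comm _ _

/-- Main C¹ ingredient: at every admissible radius, `Mfun f` has the expected derivative,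
and the derivative function is continuous. -/
lemma MfunC1 (hR : 1 < R) (hf : ∀ z ∈ ellipseRegion R, AnalyticAt ℂ f z)
    {n : ℕ} (han : chebCoeffT f n ≠ 0)
    {r₀ : ℝ} (h1 : 1 < r₀) (h2 : (r₀ : EReal) < R) :
    HasDerivAt (Mfun f) ((1/π) * ∫ θ in (0:ℝ)..(2*π), phi f r₀ θ) r₀ ∧
      ContinuousAt (fun r => (1/π) * ∫ θ in (0:ℝ)..(2*π), phi f r θ) r₀ := by
  have hg := analyticOnNhd_gmap hR hf
  obtain ⟨q, hq1, hq2⟩ := exists_real_between h2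
  set ε : ℝ := min ((r₀ - 1)/2) ((q - r₀)/2) with hεdef
  have hε : 0 < ε := lt_min (by linarith) (by linarith)
  have hball : ∀ r ∈ Metric.ball r₀ ε, 1 < r ∧ (r : EReal) < R := by
    intro r hr
    rw [Metric.mem_ball, Real.dist_eq, abs_lt] at hr
    have hε1 : ε ≤ (r₀ - 1)/2 := min_le_left _ _
    have hε2 : ε ≤ (q - r₀)/2 := min_le_right _ _
    constructor
    · linarith
    · refine lt_trans (?_ : (r : EReal) < (q : EReal)) hq2
      rw [EReal.coe_lt_coe_iff]
      linarith
  set K : Set ℂ := {u : ℂ | r₀ - ε ≤ ‖u‖} ∩ {u : ℂ | ‖u‖ ≤ r₀ + ε}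
    with hKdef
  have hKsub : K ⊆ annR R := by
    rintro u ⟨hu1, hu2⟩
    have hε1 : ε ≤ (r₀ - 1)/2 := min_le_left _ _
    have hε2 : ε ≤ (q - r₀)/2 := min_le_right _ _
    constructor
    · show 1 < ‖u‖
      have : (1:ℝ) < r₀ - ε := by linarith
      exact lt_of_lt_of_le this hu1
    · show (‖u‖ : EReal) < R
      refine lt_trans (?_ : (‖u‖ : EReal) < (q : EReal)) hq2
      rw [EReal.coe_lt_coe_iff]
      have : r₀ + ε < q := by linarith
      exact lt_of_le_of_lt hu2 this
  have hKcomp : IsCompact K := by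
    have hclosed : IsClosed K :=
      (isClosed_le continuous_const continuous_norm).inter
        (isClosed_le continuous_norm continuous_const)
    refine IsCompact.of_isClosed_subset (isCompact_closedBall (0:ℂ) (r₀ + ε)) hclosed ?_
    rintro u ⟨_, hu2⟩
    rw [Metric.mem_closedBall, dist_zero_right]
    exact hu2
  obtain ⟨C, hC⟩ := hKcomp.exists_bound_of_continuousOn ((hg.deriv.continuousOn).mono hKsub)
  have hr₀pos : (0:ℝ) < r₀ := by linarith
  have hr₀K : ((r₀ : ℝ) : ℂ) ∈ K := by
    constructor
    · show r₀ - ε ≤ ‖((r₀ : ℝ) : ℂ)‖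
      rw [Complex.norm_real, Real.norm_eq_abs, abs_of_pos hr₀pos]; linarith
    · show ‖((r₀ : ℝ) : ℂ)‖ ≤ r₀ + ε
      rw [Complex.norm_real, Real.norm_eq_abs, abs_of_pos hr₀pos]; linarith
  have hC0 : 0 ≤ C := le_trans (norm_nonneg _) (hC _ hr₀K)
  have hcircK : ∀ r ∈ Metric.ball r₀ ε, ∀ θ : ℝ, circ r θ ∈ K := by
    intro r hr θ
    have h0r : 0 < r := lt_trans zero_lt_one (hball r hr).1
    rw [Metric.mem_ball, Real.dist_eq, abs_lt] at hr
    constructor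
    · show r₀ - ε ≤ ‖circ r θ‖
      rw [abs_circ_of_pos h0r]; linarith
    · show ‖circ r θ‖ ≤ r₀ + ε
      rw [abs_circ_of_pos h0r]; linarith
  have hae : ∀ᵐ θ : ℝ ∂volume, gmap f (circ r₀ θ) ≠ 0 := by
    rw [MeasureTheory.ae_iff]
    convert (zero_theta_countable hR hf han h1 h2).measure_zero volume using 2
    ext θ
    simp
  have key := intervalIntegral.hasDerivAt_integral_of_dominated_loc_of_lip (μ := volume)
      (F := fun r θ => ‖gmap f (circ r θ)‖) (F' := phi f r₀)
      (bound := fun _ => C) (a := 0) (b := 2*π) (x₀ := r₀) (Metric.ball_mem_nhds r₀ hε)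
      ?_ ?_ ?_ ?_ ?_ ?_
  rotate_left
  · filter_upwards [Metric.ball_mem_nhds r₀ hε] with r hr
    exact (continuous_norm.comp
      (continuous_gcirc hg (hball r hr).1 (hball r hr).2)).aestronglyMeasurable
  · exact (continuous_norm.comp (continuous_gcirc hg h1 h2)).intervalIntegrable 0 (2*π)
  · exact phi_measurable hg h1 h2
  · apply Eventually.of_forall
    intro θ _
    have hlip1 : LipschitzOnWith (Real.nnabs C) (fun r : ℝ => gmap f (circ r θ))
        (Metric.ball r₀ ε) := by
      apply (convex_ball r₀ ε).lipschitzOnWith_of_nnnorm_hasDerivWithin_le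
        (f' := fun r : ℝ => deriv (gmap f) (circ r θ) * Complex.exp (θ * Complex.I))
        (fun r hr => (hasDerivAt_gcirc hg (hKsub (hcircK r hr θ))).hasDerivWithinAt)
      intro r hr
      rw [← NNReal.coe_le_coe, coe_nnnorm, Real.coe_nnabs]
      calc ‖deriv (gmap f) (circ r θ) * Complex.exp (θ * Complex.I)‖
          = ‖deriv (gmap f) (circ r θ)‖ * 1 := by
            rw [norm_mul]
            congr 1
            rw [Complex.norm_exp_ofReal_mul_I]
        _ ≤ C := by rw [mul_one]; exact hC _ (hcircK r hr θ)
        _ ≤ |C| := le_abs_self C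
    have hres := lipschitzWith_one_norm.comp_lipschitzOnWith hlip1
    rw [one_mul] at hres
    exact hres
  · exact intervalIntegrable_const
  · filter_upwards [hae] with θ hθ _
    exact hasDerivAt_cabs (hasDerivAt_gcirc hg (circ_mem_annR h1 h2 θ)) hθ
  constructor
  · exact key.2.const_mul (1/π)
  · have hcont : ContinuousAt (fun r => ∫ θ in (0:ℝ)..(2*π), phi f r θ) r₀ := by
      apply intervalIntegral.continuousAt_of_dominated_interval
        (bound := fun _ => C)
      · filter_upwards [Metric.ball_mem_nhds r₀ hε] with r hr
        exact phi_measurable hg (hball r hr).1 (hball r hr).2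
      · filter_upwards [Metric.ball_mem_nhds r₀ hε] with r hr
        apply Eventually.of_forall
        intro θ _
        exact phi_bound hg hC0 (hC _ (hcircK r hr θ))
      · exact intervalIntegrable_const
      · filter_upwards [hae] with θ hθ
        intro _
        have hcr : Continuous fun r : ℝ => circ r θ :=
          continuous_circ.comp (continuous_id.prodMk continuous_const)
        have hmem := circ_mem_annR h1 h2 θ
        have hgc : ContinuousAt (fun r : ℝ => gmap f (circ r θ)) r₀ :=
          ContinuousAt.comp (g := gmap f) (f := fun r : ℝ => circ r θ)
            ((hg _ hmem).continuousAt) hcr.continuousAt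
        have hdg : ContinuousAt (fun r : ℝ => deriv (gmap f) (circ r θ)) r₀ :=
          ContinuousAt.comp (g := deriv (gmap f)) (f := fun r : ℝ => circ r θ)
            ((hg.deriv _ hmem).continuousAt) hcr.continuousAt
        have hnum : ContinuousAt (fun r : ℝ => ((starRingEnd ℂ) (gmap f (circ r θ)) *
            (deriv (gmap f) (circ r θ) * Complex.exp (θ * Complex.I))).re) r₀ :=
          (Complex.continuous_re.continuousAt).comp
            ((Complex.continuous_conj.continuousAt.comp hgc).mul (hdg.mul continuousAt_const))
        have hden : ContinuousAt (fun r : ℝ => ‖gmap f (circ r θ)‖) r₀ :=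
          continuous_norm.continuousAt.comp hgc
        exact hnum.div hden (norm_ne_zero_iff.mpr hθ)
    exact continuousAt_const.mul hcont

lemma isOpen_Uset (R : EReal) : IsOpen {ρ : ℝ | 1 < ρ ∧ (ρ : EReal) < R} := by
  have h1 : IsOpen {ρ : ℝ | 1 < ρ} := isOpen_lt continuous_const continuous_id
  have h2 : IsOpen {ρ : ℝ | (ρ : EReal) < R} :=
    isOpen_lt continuous_coe_real_ereal continuous_const
  exact h1.inter h2

lemma Mfun_contDiffOn (hR : 1 < R) (hf : ∀ z ∈ ellipseRegion R, AnalyticAt ℂ f z)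
    {n : ℕ} (han : chebCoeffT f n ≠ 0) :
    ContDiffOn ℝ 1 (Mfun f) {ρ : ℝ | 1 < ρ ∧ (ρ : EReal) < R} := by
  have hUopen := isOpen_Uset R
  have key : ∀ r ∈ {ρ : ℝ | 1 < ρ ∧ (ρ : EReal) < R},
      HasDerivAt (Mfun f) ((1/π) * ∫ θ in (0:ℝ)..(2*π), phi f r θ) r ∧
      ContinuousAt (fun x => (1/π) * ∫ θ in (0:ℝ)..(2*π), phi f x θ) r :=
    fun r hr => MfunC1 hR hf han hr.1 hr.2
  rw [show (1 : WithTop ℕ∞) = 0 + 1 from (zero_add 1).symm,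
    contDiffOn_succ_iff_deriv_of_isOpen hUopen]
  refine ⟨fun r hr => ((key r hr).1.differentiableAt.differentiableWithinAt), ?_, ?_⟩
  · intro h
    simp at h
  · rw [contDiffOn_zero]
    intro r hr
    apply ContinuousAt.continuousWithinAt
    apply ((key r hr).2).congr
    filter_upwards [hUopen.mem_nhds hr] with x hx
    exact ((key x hx).1.deriv).symm

end CondKappa
end Chunk4

section Chunk5
open Topology Filter Metric intervalIntegral

namespace CondKappa

variable {R : EReal} {f : ℂ → ℂ}

/-- The unimodular weight used in the duality argument. -/
def omega (f : ℂ → ℂ) (r : ℝ) (θ : ℝ) : ℂ :=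
  (starRingEnd ℂ) (gmap f (circ r θ)) / ((‖gmap f (circ r θ)‖ : ℝ) : ℂ)

lemma omega_measurable (hg : AnalyticOnNhd ℂ (gmap f) (annR R)) {r : ℝ}
    (h1r : 1 < r) (hrR : (r : EReal) < R) : Measurable (omega f r) := by
  have hgc := continuous_gcirc hg h1r hrR
  exact ((Complex.continuous_conj.comp hgc).measurable).div
    ((Complex.continuous_ofReal.comp (continuous_norm.comp hgc)).measurable)

lemma omega_abs_le_one (f : ℂ → ℂ) (r θ : ℝ) : ‖omega f r θ‖ ≤ 1 := by
  unfold omega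
  rcases eq_or_ne (gmap f (circ r θ)) 0 with h | h
  · simp [h]
  · rw [norm_div, Complex.norm_conj, Complex.norm_real, Real.norm_eq_abs,
      abs_of_pos (norm_pos_iff.mpr h), div_self (norm_ne_zero_iff.mpr h)]

lemma gmul_omega (f : ℂ → ℂ) (r θ : ℝ) :
    gmap f (circ r θ) * omega f r θ = ((‖gmap f (circ r θ)‖ : ℝ) : ℂ) := by
  unfold omega
  rcases eq_or_ne (gmap f (circ r θ)) 0 with h | h
  · simp [h]
  · rw [mul_div_assoc']
    rw [Complex.mul_conj, Complex.normSq_eq_norm_sq]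
    rw [show ((‖gmap f (circ r θ)‖ ^ 2 : ℝ) : ℂ)
        = ((‖gmap f (circ r θ)‖ : ℝ) : ℂ) ^ 2 by push_cast; ring]
    rw [sq]
    rw [mul_div_assoc, div_self (by
      simpa [Complex.ofReal_eq_zero] using norm_ne_zero_iff.mpr h), mul_one]

lemma abs_mul_expI (z : ℂ) (θ : ℝ) :
    ‖z * Complex.exp (θ * Complex.I)‖ = ‖z‖ := by
  rw [norm_mul, Complex.norm_exp_ofReal_mul_I, mul_one]

lemma mem_annR_mul_exp {z : ℂ} (h1 : 1 < ‖z‖) (h2 : (‖z‖ : EReal) < R)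
    (θ : ℝ) : z * Complex.exp (θ * Complex.I) ∈ annR R := by
  have h := abs_mul_expI z θ
  constructor
  · show 1 < ‖z * Complex.exp (θ * Complex.I)‖; rw [h]; exact h1
  · show (‖z * Complex.exp (θ * Complex.I)‖ : EReal) < R; rw [h]; exact h2

lemma continuous_gz (hg : AnalyticOnNhd ℂ (gmap f) (annR R)) {z : ℂ}
    (h1 : 1 < ‖z‖) (h2 : (‖z‖ : EReal) < R) :
    Continuous fun θ : ℝ => gmap f (z * Complex.exp (θ * Complex.I)) := by
  rw [continuous_iff_continuousAt]
  intro θ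
  exact ContinuousAt.comp (g := gmap f) ((hg _ (mem_annR_mul_exp h1 h2 θ)).continuousAt)
    (continuous_const.mul continuous_exp_theta).continuousAt

lemma pi_mul_Mfun (f : ℂ → ℂ) (r : ℝ) :
    π * Mfun f r = ∫ θ in (0:ℝ)..(2*π), ‖gmap f (circ r θ)‖ := by
  rw [Mfun_eq, ← mul_assoc, mul_one_div, div_self (ne_of_gt Real.pi_pos), one_mul]

lemma rot_integral (f : ℂ → ℂ) {z : ℂ} (hz : z ≠ 0) :
    (∫ θ in (0:ℝ)..(2*π), ‖gmap f (z * Complex.exp (θ * Complex.I))‖)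
      = π * Mfun f (‖z‖) := by
  have hz' : z = ((‖z‖ : ℝ) : ℂ) * Complex.exp (Complex.arg z * Complex.I) :=
    (Complex.norm_mul_exp_arg_mul_I z).symm
  have hint : ∀ θ : ℝ, z * Complex.exp (θ * Complex.I)
      = circ (‖z‖) (θ + Complex.arg z) := by
    intro θ
    calc z * Complex.exp (θ * Complex.I)
        = ((‖z‖ : ℝ) : ℂ) * Complex.exp (Complex.arg z * Complex.I) *
            Complex.exp (θ * Complex.I) := by rw [← hz']
      _ = circ (‖z‖) (θ + Complex.arg z) := by
          unfold circ
          rw [show ((θ + Complex.arg z : ℝ) : ℂ) * Complex.I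
              = θ * Complex.I + Complex.arg z * Complex.I by push_cast; ring,
            Complex.exp_add]
          ring
  have heq : (fun θ : ℝ => ‖gmap f (z * Complex.exp (θ * Complex.I))‖)
      = fun θ : ℝ => ‖gmap f (circ (‖z‖) (θ + Complex.arg z))‖ :=
    funext fun θ => by rw [hint θ]
  rw [heq]
  have hcomp := intervalIntegral.integral_comp_add_right (a := (0:ℝ)) (b := 2*π)
    (fun θ : ℝ => ‖gmap f (circ (‖z‖) θ)‖) (Complex.arg z)
  rw [hcomp]
  have hper : Function.Periodic
      (fun θ : ℝ => ‖gmap f (circ (‖z‖) θ)‖) (2*π) :=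
    fun θ => by
      show ‖gmap f (circ (‖z‖) (θ + 2*π))‖ = _
      rw [circ_add_two_pi]
  have h2 := hper.intervalIntegral_add_eq (0 + Complex.arg z) 0
  rw [show (2*π + Complex.arg z) = 0 + Complex.arg z + 2*π by ring]
  rw [h2, zero_add]
  exact (pi_mul_Mfun f (‖z‖)).symm

/-- The basic integrand is interval integrable. -/
lemma gzomega_intervalIntegrable (hg : AnalyticOnNhd ℂ (gmap f) (annR R)) {z : ℂ}
    (h1 : 1 < ‖z‖) (h2 : (‖z‖ : EReal) < R) {r : ℝ}
    (h1r : 1 < r) (hrR : (r : EReal) < R) :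
    IntervalIntegrable (fun θ : ℝ => gmap f (z * Complex.exp (θ * Complex.I)) * omega f r θ)
      volume 0 (2*π) := by
  rw [intervalIntegrable_iff]
  apply MeasureTheory.Integrable.mono'
    (g := fun θ : ℝ => ‖gmap f (z * Complex.exp (θ * Complex.I))‖)
  · exact ((continuous_norm.comp (continuous_gz hg h1 h2)).intervalIntegrable
      0 (2*π)).def'
  · exact ((continuous_gz hg h1 h2).aestronglyMeasurable).mul
      ((omega_measurable hg h1r hrR).aestronglyMeasurable)
  · apply Eventually.of_forall
    intro θ
    rw [norm_mul]
    exact mul_le_of_le_one_right (norm_nonneg _) (omega_abs_le_one f r θ)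

/-- Bound for the dual integral on any admissible circle. -/
lemma Gint_bound (hg : AnalyticOnNhd ℂ (gmap f) (annR R)) {z : ℂ}
    (h1 : 1 < ‖z‖) (h2 : (‖z‖ : EReal) < R) {r : ℝ}
    (h1r : 1 < r) (hrR : (r : EReal) < R) :
    ‖∫ θ in (0:ℝ)..(2*π),
        gmap f (z * Complex.exp (θ * Complex.I)) * omega f r θ‖
      ≤ π * Mfun f (‖z‖) := by
  have hz0 : z ≠ 0 := by
    intro h
    rw [h, norm_zero] at h1
    norm_num at h1
  calc ‖∫ θ in (0:ℝ)..(2*π), gmap f (z * Complex.exp (θ * Complex.I)) * omega f r θ‖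
      ≤ ∫ θ in (0:ℝ)..(2*π), ‖gmap f (z * Complex.exp (θ * Complex.I)) * omega f r θ‖ :=
        intervalIntegral.norm_integral_le_integral_norm (by positivity)
    _ ≤ ∫ θ in (0:ℝ)..(2*π), ‖gmap f (z * Complex.exp (θ * Complex.I))‖ := by
        apply intervalIntegral.integral_mono_on (by positivity)
        · exact (gzomega_intervalIntegrable hg h1 h2 h1r hrR).norm
        · exact (continuous_norm.comp (continuous_gz hg h1 h2)).intervalIntegrable 0 (2*π)
        · intro θ _
          rw [norm_mul]
          exact mul_le_of_le_one_right (norm_nonneg _) (omega_abs_le_one f r θ)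
    _ = π * Mfun f (‖z‖) := rot_integral f hz0

/-- Value of the dual integral at the chosen radius. -/
lemma Gint_value (f : ℂ → ℂ) (r : ℝ) :
    (∫ θ in (0:ℝ)..(2*π), gmap f (((r:ℝ) : ℂ) * Complex.exp (θ * Complex.I)) * omega f r θ)
      = ((π * Mfun f r : ℝ) : ℂ) := by
  have heq : (fun θ : ℝ => gmap f (((r:ℝ) : ℂ) * Complex.exp (θ * Complex.I)) * omega f r θ)
      = fun θ : ℝ => ((‖gmap f (circ r θ)‖ : ℝ) : ℂ) :=
    funext fun θ => gmul_omega f r θ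
  rw [heq, pi_mul_Mfun f r]
  exact RCLike.intervalIntegral_ofReal

end CondKappa
end Chunk5

section Chunk6
open Topology Filter Metric intervalIntegral

namespace CondKappa

variable {R : EReal} {f : ℂ → ℂ}

lemma continuous_dgz (hg : AnalyticOnNhd ℂ (gmap f) (annR R)) {z : ℂ}
    (h1 : 1 < ‖z‖) (h2 : (‖z‖ : EReal) < R) :
    Continuous fun θ : ℝ => deriv (gmap f) (z * Complex.exp (θ * Complex.I)) := by
  rw [continuous_iff_continuousAt]
  intro θ
  exact ContinuousAt.comp (g := deriv (gmap f))
    ((hg.deriv _ (mem_annR_mul_exp h1 h2 θ)).continuousAt)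
    (continuous_const.mul continuous_exp_theta).continuousAt

lemma Gint_differentiable (hg : AnalyticOnNhd ℂ (gmap f) (annR R)) {r : ℝ}
    (h1r : 1 < r) (hrR : (r : EReal) < R) {z₀ : ℂ}
    (h1 : 1 < ‖z₀‖) (h2 : (‖z₀‖ : EReal) < R) :
    DifferentiableAt ℂ (fun z : ℂ =>
      ∫ θ in (0:ℝ)..(2*π), gmap f (z * Complex.exp (θ * Complex.I)) * omega f r θ) z₀ := by
  obtain ⟨q, hq1, hq2⟩ := exists_real_between h2
  set ε : ℝ := min ((‖z₀‖ - 1)/2) ((q - ‖z₀‖)/2) with hεdef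
  have hε : 0 < ε := lt_min (by linarith) (by linarith)
  have hε1 : ε ≤ (‖z₀‖ - 1)/2 := min_le_left _ _
  have hε2 : ε ≤ (q - ‖z₀‖)/2 := min_le_right _ _
  set K : Set ℂ := {u : ℂ | ‖z₀‖ - ε ≤ ‖u‖} ∩
    {u : ℂ | ‖u‖ ≤ ‖z₀‖ + ε} with hKdef
  have hKsub : K ⊆ annR R := by
    rintro u ⟨hu1, hu2⟩
    constructor
    · show 1 < ‖u‖
      have : (1:ℝ) < ‖z₀‖ - ε := by linarith
      exact lt_of_lt_of_le this hu1
    · show (‖u‖ : EReal) < R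
      refine lt_trans (?_ : (‖u‖ : EReal) < (q : EReal)) hq2
      rw [EReal.coe_lt_coe_iff]
      have : ‖z₀‖ + ε < q := by linarith
      exact lt_of_le_of_lt hu2 this
  have hKcomp : IsCompact K := by
    have hclosed : IsClosed K :=
      (isClosed_le continuous_const continuous_norm).inter
        (isClosed_le continuous_norm continuous_const)
    refine IsCompact.of_isClosed_subset (isCompact_closedBall (0:ℂ) (‖z₀‖ + ε))
      hclosed ?_
    rintro u ⟨_, hu2⟩
    rw [Metric.mem_closedBall, dist_zero_right]
    exact hu2
  obtain ⟨C, hC⟩ := hKcomp.exists_bound_of_continuousOn ((hg.deriv.continuousOn).mono hKsub)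
  have hballz : ∀ z ∈ Metric.ball z₀ ε,
      (1 < ‖z‖ ∧ (‖z‖ : EReal) < R) ∧
      ∀ θ : ℝ, z * Complex.exp (θ * Complex.I) ∈ K := by
    intro z hz
    rw [Metric.mem_ball, Complex.dist_eq] at hz
    have habs : |‖z‖ - ‖z₀‖| ≤ ‖z - z₀‖ := by
      exact abs_norm_sub_norm_le z z₀
    rw [abs_le] at habs
    have hzlo : ‖z₀‖ - ε ≤ ‖z‖ := by linarith [habs.1]
    have hzhi : ‖z‖ ≤ ‖z₀‖ + ε := by linarith [habs.2]
    refine ⟨⟨by linarith, ?_⟩, ?_⟩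
    · refine lt_trans (?_ : (‖z‖ : EReal) < (q : EReal)) hq2
      rw [EReal.coe_lt_coe_iff]
      linarith
    · intro θ
      have h := abs_mul_expI z θ
      constructor
      · show ‖z₀‖ - ε ≤ ‖z * Complex.exp (θ * Complex.I)‖
        rw [h]; exact hzlo
      · show ‖z * Complex.exp (θ * Complex.I)‖ ≤ ‖z₀‖ + ε
        rw [h]; exact hzhi
  have key := intervalIntegral.hasDerivAt_integral_of_dominated_loc_of_deriv_le (𝕜 := ℂ)
      (μ := volume) (a := 0) (b := 2*π) (x₀ := z₀)
      (F := fun z θ => gmap f (z * Complex.exp (θ * Complex.I)) * omega f r θ)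
      (F' := fun z θ => deriv (gmap f) (z * Complex.exp (θ * Complex.I)) *
        Complex.exp (θ * Complex.I) * omega f r θ)
      (bound := fun _ => C) (Metric.ball_mem_nhds z₀ hε) ?_ ?_ ?_ ?_ ?_ ?_
  · exact key.2.differentiableAt
  · filter_upwards [Metric.ball_mem_nhds z₀ hε] with z hz
    exact ((continuous_gz hg (hballz z hz).1.1 (hballz z hz).1.2).aestronglyMeasurable).mul
      ((omega_measurable hg h1r hrR).aestronglyMeasurable)
  · exact gzomega_intervalIntegrable hg h1 h2 h1r hrR
  · exact (((continuous_dgz hg h1 h2).mul continuous_exp_theta).aestronglyMeasurable).mul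
      ((omega_measurable hg h1r hrR).aestronglyMeasurable)
  · apply Eventually.of_forall
    intro θ _ z hz
    have hC0 : 0 ≤ C := le_trans (norm_nonneg _) (hC _ ((hballz z₀ (Metric.mem_ball_self hε)).2 θ))
    rw [norm_mul, norm_mul]
    calc ‖deriv (gmap f) (z * Complex.exp (θ * Complex.I))‖ * ‖Complex.exp (θ * Complex.I)‖ *
        ‖omega f r θ‖
        ≤ C * 1 * 1 := by
          apply mul_le_mul _ _ (norm_nonneg _) (by positivity)
          · apply mul_le_mul _ _ (norm_nonneg _) hC0
            · exact hC _ ((hballz z hz).2 θ)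
            · rw [Complex.norm_exp_ofReal_mul_I]
          · exact omega_abs_le_one f r θ
      _ = C := by ring
  · exact intervalIntegrable_const
  · apply Eventually.of_forall
    intro θ _ z hz
    have hmem : z * Complex.exp (θ * Complex.I) ∈ annR R := hKsub ((hballz z hz).2 θ)
    have hd : HasDerivAt (gmap f) (deriv (gmap f) (z * Complex.exp (θ * Complex.I)))
        (z * Complex.exp (θ * Complex.I)) := ((hg _ hmem).differentiableAt).hasDerivAt
    have hmul : HasDerivAt (fun w : ℂ => w * Complex.exp (θ * Complex.I))
        (Complex.exp (θ * Complex.I)) z := hasDerivAt_mul_const _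
    exact (hd.comp z hmul).mul_const (omega f r θ)

/-- Three-circles inequality for `Mfun`. -/
lemma Mfun_three_circles (hR : 1 < R) (hf : ∀ z ∈ ellipseRegion R, AnalyticAt ℂ f z)
    {n : ℕ} (han : chebCoeffT f n ≠ 0)
    {r₁ r₂ : ℝ} (h11 : 1 < r₁) (h1R : (r₁ : EReal) < R)
    (h21 : 1 < r₂) (h2R : (r₂ : EReal) < R) {a b : ℝ}
    (ha : 0 ≤ a) (hb : 0 ≤ b) (hab : a + b = 1) :
    Mfun f (Real.exp (a * Real.log r₁ + b * Real.log r₂))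
      ≤ Mfun f r₁ ^ a * Mfun f r₂ ^ b := by
  have hg := analyticOnNhd_gmap hR hf
  set s₁ := Real.log r₁ with hs₁
  set s₂ := Real.log r₂ with hs₂
  have hr₁e : Real.exp s₁ = r₁ := Real.exp_log (by linarith)
  have hr₂e : Real.exp s₂ = r₂ := Real.exp_log (by linarith)
  set d := s₂ - s₁ with hd
  set r := Real.exp (a * s₁ + b * s₂) with hrdef
  have hb1 : b ≤ 1 := by linarith
  have hmaxR : ((max r₁ r₂ : ℝ) : EReal) < R := by
    rcases max_cases r₁ r₂ with ⟨h, _⟩ | ⟨h, _⟩ <;> rw [h] <;> assumption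
  obtain ⟨q, hq1, hq2⟩ := exists_real_between hmaxR
  have h1min : 1 < min r₁ r₂ := lt_min h11 h21
  have hexp_between : ∀ t : ℝ, 0 ≤ t → t ≤ 1 →
      min r₁ r₂ ≤ Real.exp (s₁ + t * d) ∧ Real.exp (s₁ + t * d) ≤ max r₁ r₂ := by
    intro t ht0 ht1
    have hminexp : min r₁ r₂ = Real.exp (min s₁ s₂) := by
      rcases le_total s₁ s₂ with h | h
      · rw [min_eq_left h, min_eq_left (by rw [← hr₁e, ← hr₂e]; exact Real.exp_le_exp.2 h)]
        exact hr₁e.symm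
      · rw [min_eq_right h, min_eq_right (by rw [← hr₁e, ← hr₂e]; exact Real.exp_le_exp.2 h)]
        exact hr₂e.symm
    have hmaxexp : max r₁ r₂ = Real.exp (max s₁ s₂) := by
      rcases le_total s₁ s₂ with h | h
      · rw [max_eq_right h, max_eq_right (by rw [← hr₁e, ← hr₂e]; exact Real.exp_le_exp.2 h)]
        exact hr₂e.symm
      · rw [max_eq_left h, max_eq_left (by rw [← hr₁e, ← hr₂e]; exact Real.exp_le_exp.2 h)]
        exact hr₁e.symm
    have hlo : min s₁ s₂ ≤ s₁ + t * d := by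
      rcases le_total 0 d with hd0 | hd0
      · nlinarith [min_le_left s₁ s₂]
      · nlinarith [min_le_right s₁ s₂]
    have hhi : s₁ + t * d ≤ max s₁ s₂ := by
      rcases le_total 0 d with hd0 | hd0
      · nlinarith [le_max_right s₁ s₂]
      · nlinarith [le_max_left s₁ s₂]
    constructor
    · rw [hminexp]; exact Real.exp_le_exp.2 hlo
    · rw [hmaxexp]; exact Real.exp_le_exp.2 hhi
  have habsexp : ∀ w : ℂ, ‖Complex.exp ((s₁ : ℂ) + w * (d : ℂ))‖
      = Real.exp (s₁ + w.re * d) := by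
    intro w
    rw [Complex.norm_exp]
    congr 1
    simp [Complex.add_re, Complex.mul_re, Complex.ofReal_re, Complex.ofReal_im]
  have hr_eq : a * s₁ + b * s₂ = s₁ + b * d := by
    have haeq : a = 1 - b := by linarith
    rw [haeq, hd]; ring
  have h1r : 1 < r := by
    rw [hrdef, hr_eq, show s₁ + b * d = s₁ + b * d from rfl]
    have := (hexp_between b hb hb1).1
    linarith
  have hrR : (r : EReal) < R := by
    refine lt_trans (?_ : (r : EReal) < (q : EReal)) hq2
    rw [EReal.coe_lt_coe_iff]
    have := (hexp_between b hb hb1).2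
    rw [hrdef, hr_eq]
    linarith
  set Φ : ℂ → ℂ := fun w => ∫ θ in (0:ℝ)..(2*π),
    gmap f (Complex.exp ((s₁ : ℂ) + w * (d : ℂ)) * Complex.exp (θ * Complex.I)) * omega f r θ
    with hΦdef
  have hstrip : ∀ w : ℂ, 0 ≤ w.re → w.re ≤ 1 →
      1 < ‖Complex.exp ((s₁ : ℂ) + w * (d : ℂ))‖ ∧
      (‖Complex.exp ((s₁ : ℂ) + w * (d : ℂ))‖ : EReal) < R := by
    intro w h0 h1'
    rw [habsexp]
    constructor
    · linarith [(hexp_between w.re h0 h1').1]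
    · refine lt_trans (?_ : ((Real.exp (s₁ + w.re * d) : ℝ) : EReal) < (q : EReal)) hq2
      rw [EReal.coe_lt_coe_iff]
      linarith [(hexp_between w.re h0 h1').2]
  have hΦdiff : DifferentiableOn ℂ Φ (Complex.HadamardThreeLines.verticalClosedStrip 0 1) := by
    intro w hw
    have hw' : w.re ∈ Set.Icc (0:ℝ) 1 := hw
    have hz := hstrip w hw'.1 hw'.2
    have hG := Gint_differentiable hg h1r hrR hz.1 hz.2
    have hinner : DifferentiableAt ℂ (fun w : ℂ => Complex.exp ((s₁:ℂ) + w * (d:ℂ))) w :=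
      ((differentiableAt_const _).add (differentiableAt_id.mul_const _)).cexp
    exact (hG.comp w hinner).differentiableWithinAt
  have hcl : closure (Complex.HadamardThreeLines.verticalStrip 0 1)
      ⊆ Complex.HadamardThreeLines.verticalClosedStrip 0 1 := by
    refine (Continuous.closure_preimage_subset Complex.continuous_re _).trans ?_
    rw [closure_Ioo (zero_ne_one)]
    exact fun x hx => hx
  have hΦdc : DiffContOnCl ℂ Φ (Complex.HadamardThreeLines.verticalStrip 0 1) :=
    DifferentiableOn.diffContOnCl (hΦdiff.mono hcl)
  -- boundedness
  set K2 : Set ℂ := {u : ℂ | min r₁ r₂ ≤ ‖u‖} ∩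
    {u : ℂ | ‖u‖ ≤ max r₁ r₂} with hK2def
  have hK2sub : K2 ⊆ annR R := by
    rintro u ⟨hu1, hu2⟩
    constructor
    · show 1 < ‖u‖
      exact lt_of_lt_of_le h1min hu1
    · show (‖u‖ : EReal) < R
      exact lt_of_le_of_lt (EReal.coe_le_coe_iff.2 hu2) hmaxR
  have hK2comp : IsCompact K2 := by
    have hclosed : IsClosed K2 :=
      (isClosed_le continuous_const continuous_norm).inter
        (isClosed_le continuous_norm continuous_const)
    refine IsCompact.of_isClosed_subset (isCompact_closedBall (0:ℂ) (max r₁ r₂)) hclosed ?_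
    rintro u ⟨_, hu2⟩
    rw [Metric.mem_closedBall, dist_zero_right]
    exact hu2
  obtain ⟨C2, hC2⟩ := hK2comp.exists_bound_of_continuousOn ((hg.continuousOn).mono hK2sub)
  have hC20 : 0 ≤ C2 := by
    refine le_trans (norm_nonneg (gmap f (circ r₁ 0))) (hC2 _ ?_)
    have h := abs_circ_of_pos (lt_trans zero_lt_one h11) (0:ℝ)
    constructor
    · show min r₁ r₂ ≤ ‖circ r₁ 0‖; rw [h]; exact min_le_left _ _
    · show ‖circ r₁ 0‖ ≤ max r₁ r₂; rw [h]; exact le_max_left _ _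
  have hB : BddAbove ((norm ∘ Φ) '' Complex.HadamardThreeLines.verticalClosedStrip 0 1) := by
    refine ⟨C2 * |2*π - 0|, ?_⟩
    rintro x ⟨w, hw, rfl⟩
    have hw' : w.re ∈ Set.Icc (0:ℝ) 1 := hw
    show ‖Φ w‖ ≤ C2 * |2*π - 0|
    apply intervalIntegral.norm_integral_le_of_norm_le_const
    intro θ _
    have hzK2 : Complex.exp ((s₁:ℂ) + w * (d:ℂ)) * Complex.exp (θ * Complex.I) ∈ K2 := by
      have h := abs_mul_expI (Complex.exp ((s₁:ℂ) + w * (d:ℂ))) θ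
      constructor
      · show min r₁ r₂ ≤ ‖_‖
        rw [h, habsexp]
        exact (hexp_between w.re hw'.1 hw'.2).1
      · show ‖_‖ ≤ max r₁ r₂
        rw [h, habsexp]
        exact (hexp_between w.re hw'.1 hw'.2).2
    rw [norm_mul]
    calc ‖gmap f (Complex.exp ((s₁:ℂ) + w * (d:ℂ)) * Complex.exp (θ * Complex.I))‖ *
        ‖omega f r θ‖ ≤ C2 * 1 := by
          apply mul_le_mul (hC2 _ hzK2) _ (norm_nonneg _) hC20
          exact omega_abs_le_one f r θ
      _ = C2 := mul_one _
  -- edges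
  have hedge : ∀ (c : ℝ) (rc : ℝ), s₁ + c * d = Real.log rc → 1 < rc → ((rc:ℝ):EReal) < R →
      ∀ w ∈ Complex.re ⁻¹' {c}, ‖Φ w‖ ≤ π * Mfun f rc := by
    intro c rc hrc h1c h2c w hw
    have hwre : w.re = c := hw
    have habs : ‖Complex.exp ((s₁:ℂ) + w * (d:ℂ))‖ = rc := by
      rw [habsexp, hwre, hrc, Real.exp_log (by linarith)]
    have h1z : 1 < ‖Complex.exp ((s₁:ℂ) + w * (d:ℂ))‖ := by rw [habs]; exact h1c
    have h2z : (‖Complex.exp ((s₁:ℂ) + w * (d:ℂ))‖ : EReal) < R := by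
      rw [habs]; exact h2c
    have := Gint_bound hg h1z h2z h1r hrR
    rw [habs] at this
    exact this
  have hmem : (b : ℂ) ∈ Complex.HadamardThreeLines.verticalClosedStrip 0 1 := by
    show (b:ℂ).re ∈ Set.Icc (0:ℝ) 1
    rw [Complex.ofReal_re]
    exact ⟨hb, hb1⟩
  have hkey := Complex.HadamardThreeLines.norm_le_interp_of_mem_verticalClosedStrip' (f := Φ) zero_lt_one hmem
    hΦdc hB
    (hedge 0 r₁ (by rw [zero_mul, add_zero]) h11 h1R)
    (hedge 1 r₂ (by rw [one_mul, hd]; ring_nf; exact hs₂) h21 h2R)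
  have hΦb : Φ ((b:ℝ) : ℂ) = ((π * Mfun f r : ℝ) : ℂ) := by
    have hexpval : Complex.exp ((s₁:ℂ) + ((b:ℝ):ℂ) * (d:ℂ)) = ((r : ℝ) : ℂ) := by
      rw [show (s₁:ℂ) + ((b:ℝ):ℂ) * (d:ℂ) = ((s₁ + b * d : ℝ) : ℂ) by push_cast; ring]
      rw [← Complex.ofReal_exp]
      rw [hrdef, hr_eq]
    show (∫ θ in (0:ℝ)..(2*π),
        gmap f (Complex.exp ((s₁ : ℂ) + ((b:ℝ):ℂ) * (d : ℂ)) * Complex.exp (θ * Complex.I)) *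
          omega f r θ) = ((π * Mfun f r : ℝ) : ℂ)
    rw [hexpval]
    exact Gint_value f r
  rw [hΦb] at hkey
  rw [Complex.norm_real, Real.norm_eq_abs,
    _root_.abs_of_nonneg (mul_nonneg Real.pi_pos.le (Mfun_nonneg f r)), Complex.ofReal_re] at hkey
  rw [sub_zero, sub_zero, div_one] at hkey
  rw [show (1:ℝ) - b = a by linarith] at hkey
  have hM1 : 0 ≤ Mfun f r₁ := Mfun_nonneg f r₁
  have hM2 : 0 ≤ Mfun f r₂ := Mfun_nonneg f r₂
  have hrhs : (π * Mfun f r₁) ^ a * (π * Mfun f r₂) ^ b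
      = π * (Mfun f r₁ ^ a * Mfun f r₂ ^ b) := by
    rw [Real.mul_rpow Real.pi_pos.le hM1, Real.mul_rpow Real.pi_pos.le hM2,
      show π ^ a * Mfun f r₁ ^ a * (π ^ b * Mfun f r₂ ^ b)
        = (π ^ a * π ^ b) * (Mfun f r₁ ^ a * Mfun f r₂ ^ b) by ring,
      ← Real.rpow_add Real.pi_pos, hab, Real.rpow_one]
  rw [hrhs] at hkey
  have : π * Mfun f r ≤ π * (Mfun f r₁ ^ a * Mfun f r₂ ^ b) := hkey
  have hfin := le_of_mul_le_mul_left this Real.pi_pos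
  rw [hrdef] at hfin ⊢
  exact hfin

end CondKappa
end Chunk6
/-- for a nonconstant f with aₙ ≠ 0, the condition number
κ(n,ρ) = M(ρ)/(|aₙ|ρⁿ) is continuously differentiable in ρ on (1, R), and
log κ(n,ρ) is a convex function of log ρ. -/
theorem condition_number_contDiff_and_logConvex
    (R : EReal) (hR : 1 < R) (f : ℂ → ℂ)
    (hf : ∀ z ∈ ellipseRegion R, AnalyticAt ℂ f z)
    (hnc : ¬ ∃ c : ℂ, ∀ z ∈ ellipseRegion R, f z = c)
    (n : ℕ) (han : chebCoeffT f n ≠ 0) :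
    ContDiffOn ℝ 1 (fun ρ : ℝ => Mfun f ρ / (‖chebCoeffT f n‖ * ρ ^ n))
      {ρ : ℝ | 1 < ρ ∧ (ρ : EReal) < R} ∧
    ConvexOn ℝ {s : ℝ | 0 < s ∧ ((Real.exp s : ℝ) : EReal) < R}
      (fun s => Real.log
        (Mfun f (Real.exp s) / (‖chebCoeffT f n‖ * Real.exp s ^ n))) := by
  have hMC1 := CondKappa.Mfun_contDiffOn hR hf han
  constructor
  · -- C¹ regularity
    apply ContDiffOn.div hMC1
    · exact (contDiff_const.mul (contDiff_id.pow n)).contDiffOn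
    · intro ρ hρ
      have hρ0 : (0:ℝ) < ρ := lt_trans zero_lt_one hρ.1
      exact mul_ne_zero (norm_ne_zero_iff.mpr han) (pow_ne_zero n hρ0.ne')
  · -- log-convexity in log ρ
    have hc : 0 < ‖chebCoeffT f n‖ := norm_pos_iff.mpr han
    refine ⟨?_, ?_⟩
    · -- the domain is convex
      apply Set.OrdConnected.convex
      constructor
      rintro x ⟨hx1, hx2⟩ y ⟨hy1, hy2⟩ z ⟨hz1, hz2⟩
      refine ⟨lt_of_lt_of_le hx1 hz1, ?_⟩
      exact lt_of_le_of_lt (EReal.coe_le_coe_iff.2 (Real.exp_le_exp.2 hz2)) hy2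
    · intro x hx y hy a b ha hb hab
      simp only [smul_eq_mul]
      have h11 : 1 < Real.exp x := by
        rw [show (1:ℝ) = Real.exp 0 by simp]
        exact Real.exp_lt_exp.2 hx.1
      have h21 : 1 < Real.exp y := by
        rw [show (1:ℝ) = Real.exp 0 by simp]
        exact Real.exp_lt_exp.2 hy.1
      have key := CondKappa.Mfun_three_circles hR hf han h11 hx.2 h21 hy.2 ha hb hab
      rw [Real.log_exp, Real.log_exp] at key
      have hmin : 0 < min x y := lt_min hx.1 hy.1
      have hcomb_pos : 0 < a * x + b * y := by
        have h1 : min x y ≤ a * x + b * y := by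
          nlinarith [min_le_left x y, min_le_right x y]
        linarith
      have h1m : 1 < Real.exp (a * x + b * y) := by
        rw [show (1:ℝ) = Real.exp 0 by simp]
        exact Real.exp_lt_exp.2 hcomb_pos
      have hmaxR : ((max (Real.exp x) (Real.exp y) : ℝ) : EReal) < R := by
        rcases max_cases (Real.exp x) (Real.exp y) with ⟨h, _⟩ | ⟨h, _⟩ <;> rw [h]
        · exact hx.2
        · exact hy.2
      have hcombR : ((Real.exp (a * x + b * y) : ℝ) : EReal) < R := by
        have h3 : Real.exp (a * x + b * y) ≤ max (Real.exp x) (Real.exp y) := by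
          rcases le_total x y with h | h
          · refine le_trans (Real.exp_le_exp.2 (?_ : a * x + b * y ≤ y)) (le_max_right _ _)
            nlinarith
          · refine le_trans (Real.exp_le_exp.2 (?_ : a * x + b * y ≤ x)) (le_max_left _ _)
            nlinarith
        exact lt_of_le_of_lt (EReal.coe_le_coe_iff.2 h3) hmaxR
      have hMr := CondKappa.Mfun_pos hR hf han h1m hcombR
      have hM1 := CondKappa.Mfun_pos hR hf han h11 hx.2
      have hM2 := CondKappa.Mfun_pos hR hf han h21 hy.2
      have hlog : ∀ s : ℝ, 0 < Mfun f (Real.exp s) →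
          Real.log (Mfun f (Real.exp s) / (‖chebCoeffT f n‖ * Real.exp s ^ n))
            = Real.log (Mfun f (Real.exp s)) - Real.log (‖chebCoeffT f n‖)
              - n * s := by
        intro s hM
        rw [Real.log_div hM.ne' (by positivity), Real.log_mul hc.ne' (by positivity),
          Real.log_pow, Real.log_exp]
        ring
      rw [hlog _ hMr, hlog x hM1, hlog y hM2]
      have hlogkey : Real.log (Mfun f (Real.exp (a * x + b * y)))
          ≤ a * Real.log (Mfun f (Real.exp x)) + b * Real.log (Mfun f (Real.exp y)) := by
        calc Real.log (Mfun f (Real.exp (a * x + b * y)))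
            ≤ Real.log (Mfun f (Real.exp x) ^ a * Mfun f (Real.exp y) ^ b) :=
              Real.log_le_log hMr key
          _ = a * Real.log (Mfun f (Real.exp x)) + b * Real.log (Mfun f (Real.exp y)) := by
              rw [Real.log_mul (by positivity) (by positivity),
                Real.log_rpow hM1, Real.log_rpow hM2]
      have hlc : a * Real.log (‖chebCoeffT f n‖)
          + b * Real.log (‖chebCoeffT f n‖)
          = Real.log (‖chebCoeffT f n‖) := by
        rw [← add_mul, hab, one_mul]
      nlinarith [hlogkey, hlc]
end
end

section
/- Let ρ > 1 and let f be analytic inside and on the Bernstein ellipse E_ρ. Define H(x) = (1/(2πi)) ∮_{|u|=ρ} f(½(u + u^{-1})) (1 − u^{-2})/(u − x) du for |x| < ρ. Then H is analytic on the disk {x : |x| < ρ}, and for every k ≥ 0 the k-th Taylor coefficient of H at 0 equals the k-th Chebyshev coefficient of the second kind of f: H^{(k)}(0)/k! = b_k. -/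
open Complex Real MeasureTheory Polynomial

noncomputable section

/-- H(x) = (1/(2πi)) ∮_{|u|=ρ} f(½(u+u⁻¹))(1−u⁻²)/(u−x) du. -/
def Hsecond (f : ℂ → ℂ) (ρ : ℝ) (x : ℂ) : ℂ :=
  (1 / (2 * (π : ℂ) * Complex.I)) *
    ∮ u in C(0, ρ), f ((u + u⁻¹) / 2) * (1 - u⁻¹ ^ 2) / (u - x)
lemma joukowski_one_eq (θ : ℝ) : joukowski 1 θ = (Real.cos θ : ℂ) := by
  simp [joukowski, ← Complex.exp_neg, Complex.cos, Complex.ofReal_cos]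

lemma exp_add_inv_eq (t : ℝ) :
    Complex.exp (t*Complex.I) + (Complex.exp (t*Complex.I))⁻¹ = 2 * (Real.cos t : ℂ) := by
  rw [← Complex.exp_neg, Complex.ofReal_cos, Complex.cos]; ring_nf

lemma mem_bernsteinDisk_of_abs {ρ : ℝ} (u : ℂ) (h1 : 1 ≤ ‖u‖)
    (h2 : ‖u‖ ≤ ρ) : (u + u⁻¹) / 2 ∈ bernsteinDisk ρ := by
  refine ⟨‖u‖, Complex.arg u, h1, h2, ?_⟩
  rw [joukowski, Complex.norm_mul_exp_arg_mul_I]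

lemma real_cos_mem_bernsteinDisk {ρ : ℝ} (hρ : 1 ≤ ρ) (θ : ℝ) :
    ((Real.cos θ : ℝ) : ℂ) ∈ bernsteinDisk ρ :=
  ⟨1, θ, le_refl 1, hρ, (joukowski_one_eq θ).symm⟩

/-- The auxiliary function g(u) = f(½(u+u⁻¹))(1−u⁻²). -/
def gAux (f : ℂ → ℂ) : ℂ → ℂ := fun u => f ((u + u⁻¹) / 2) * (1 - u⁻¹ ^ 2)

/-- the Chebyshev coefficients of the second kind of f are the
Taylor coefficients at 0 of the function H, which is analytic on |x| < ρ. -/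
theorem chebyshev_coeffs_are_taylor_coeffs_second_kind
    (ρ : ℝ) (hρ : 1 < ρ) (f : ℂ → ℂ) (hf : AnalyticOnBernstein f ρ) :
    (∀ x ∈ Metric.ball (0 : ℂ) ρ, AnalyticAt ℂ (Hsecond f ρ) x) ∧
    ∀ k : ℕ, iteratedDeriv k (Hsecond f ρ) 0 / (k.factorial : ℂ) = chebCoeffU f k := by
  obtain ⟨U, hUo, hUsub, hUan⟩ := hf
  have hρ0 : (0:ℝ) < ρ := lt_trans one_pos hρ
  -- differentiability of g on the closed annulus
  have hgd : ∀ u : ℂ, 1 ≤ ‖u‖ → ‖u‖ ≤ ρ → DifferentiableAt ℂ (gAux f) u := by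
    intro u h1 h2
    have hu : u ≠ 0 := by
      intro h; rw [h] at h1; simp at h1; linarith
    have hmem : (u + u⁻¹) / 2 ∈ U := hUsub (mem_bernsteinDisk_of_abs u h1 h2)
    have hinner : DifferentiableAt ℂ (fun u : ℂ => (u + u⁻¹) / 2) u :=
      (differentiableAt_id.add (differentiableAt_inv hu)).div_const 2
    have hfd : DifferentiableAt ℂ f ((u + u⁻¹) / 2) := (hUan _ hmem).differentiableAt
    exact (hfd.comp u hinner).mul
      ((differentiableAt_const _).sub ((differentiableAt_inv hu).pow 2))
  have hgc : CircleIntegrable (gAux f) 0 ρ := by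
    apply ContinuousOn.circleIntegrable hρ0.le
    intro u hu
    rw [Metric.mem_sphere, Complex.dist_eq, sub_zero] at hu
    exact (hgd u (by rw [hu]; exact hρ.le) (le_of_eq hu)).continuousAt.continuousWithinAt
  -- H equals the Cauchy integral of g
  have hHeq : Hsecond f ρ =
      fun w => (2 * (π:ℝ) * Complex.I : ℂ)⁻¹ • ∮ u in C(0, ρ), (u - w)⁻¹ • gAux f u := by
    funext w
    rw [Hsecond]
    congr 1
    · rw [one_div]
    · congr 1; funext u; simp only [gAux, smul_eq_mul]; ring
  -- power series
  lift ρ to NNReal using hρ0.le with R hR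
  have hRpos : 0 < R := by exact_mod_cast hρ0
  have hps : HasFPowerSeriesOnBall (Hsecond f R) (cauchyPowerSeries (gAux f) 0 R) 0 R := by
    rw [hHeq]
    exact hasFPowerSeriesOn_cauchy_integral hgc hRpos
  constructor
  · intro x hx
    have : x ∈ Metric.eball (0:ℂ) R := by
      rwa [Metric.emetric_ball_nnreal]
    exact hps.analyticOnNhd _ this
  intro k
  have hcoeff : iteratedDeriv k (Hsecond f R) 0 =
      (k.factorial : ℂ) * (cauchyPowerSeries (gAux f) 0 R k fun _ => (1:ℂ)) := by
    have h := hps.factorial_smul (1:ℂ) k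
    rw [iteratedDeriv_eq_iteratedFDeriv, ← h, nsmul_eq_mul]
  rw [hcoeff, mul_comm, mul_div_assoc, div_self (by exact_mod_cast k.factorial_ne_zero), mul_one]
  -- continuity of θ ↦ f(cos θ)
  have hfc : Continuous fun θ : ℝ => f ((Real.cos θ : ℝ) : ℂ) := by
    rw [continuous_iff_continuousAt]
    intro θ
    exact (((hUan _ (hUsub (real_cos_mem_bernsteinDisk hρ.le θ))).continuousAt).comp
      Complex.continuous_ofReal.continuousAt).comp Real.continuous_cos.continuousAt
  have hEc : ∀ n : ℕ, Continuous fun θ : ℝ => (Complex.exp (θ * Complex.I))⁻¹ ^ n := by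
    intro n
    exact (((Complex.continuous_ofReal.mul continuous_const).cexp).inv₀
      (fun θ => Complex.exp_ne_zero _)).pow n
  -- step 2: coefficient as contour integral
  have h2 : (cauchyPowerSeries (gAux f) 0 R k fun _ => (1:ℂ)) =
      (2 * (π:ℝ) * Complex.I : ℂ)⁻¹ * ∮ u in C(0, (R:ℝ)), gAux f u * u⁻¹ ^ (k+1) := by
    rw [cauchyPowerSeries_apply, smul_eq_mul]
    congr 2
    funext u
    simp only [sub_zero, smul_eq_mul, one_div, div_pow, one_pow]
    ring
  -- step 3: contour deformation to the unit circle
  have h3 : (∮ u in C(0, (R:ℝ)), gAux f u * u⁻¹ ^ (k+1)) = ∮ u in C(0, 1), gAux f u * u⁻¹ ^ (k+1) := by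
    apply circleIntegral_eq_of_differentiable_on_annulus_off_countable one_pos hρ.le
      Set.countable_empty
    · intro u hu
      obtain ⟨hu2, hu1⟩ := hu
      rw [Metric.mem_closedBall, Complex.dist_eq, sub_zero] at hu2
      rw [Metric.mem_ball, Complex.dist_eq, sub_zero, not_lt] at hu1
      have hune : u ≠ 0 := by
        intro h; rw [h] at hu1; simp at hu1; linarith
      exact ((hgd u hu1 hu2).mul ((differentiableAt_inv hune).pow _)).continuousAt.continuousWithinAt
    · rintro u ⟨⟨hu2, hu1⟩, -⟩
      rw [Metric.mem_ball, Complex.dist_eq, sub_zero] at hu2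
      rw [Metric.mem_closedBall, Complex.dist_eq, sub_zero, not_le] at hu1
      have hune : u ≠ 0 := by
        intro h; rw [h] at hu1; simp at hu1; linarith
      exact (hgd u hu1.le hu2.le).mul ((differentiableAt_inv hune).pow _)
  -- step 4: parametrize the unit circle
  have h4 : (∮ u in C(0, 1), gAux f u * u⁻¹ ^ (k+1)) =
      ∫ θ in (0:ℝ)..2*π, Complex.I * (f ((Real.cos θ : ℝ):ℂ) *
        ((Complex.exp (θ*Complex.I))⁻¹ ^ k - (Complex.exp (θ*Complex.I))⁻¹ ^ (k+2))) := by
    rw [circleIntegral]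
    apply intervalIntegral.integral_congr
    intro θ _
    beta_reduce
    have he : Complex.exp ((θ:ℂ)*Complex.I) ≠ 0 := Complex.exp_ne_zero _
    simp only [deriv_circleMap, circleMap_zero, Complex.ofReal_one, one_mul, smul_eq_mul, gAux]
    have hcos : (Complex.exp ((θ:ℂ)*Complex.I) + (Complex.exp ((θ:ℂ)*Complex.I))⁻¹)/2
        = ((Real.cos θ:ℝ):ℂ) := by
      rw [exp_add_inv_eq]; ring
    rw [hcos]
    field_simp
    linear_combination (f ((Real.cos θ : ℝ):ℂ) * (Complex.exp ((θ:ℂ)*Complex.I))⁻¹ ^ k *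
      (Complex.exp ((θ:ℂ)*Complex.I) + (Complex.exp ((θ:ℂ)*Complex.I))⁻¹)) * mul_inv_cancel₀ he
  -- step 5: split into two integrals
  have hint : ∀ (n : ℕ) (a b : ℝ), IntervalIntegrable
      (fun θ : ℝ => f ((Real.cos θ : ℝ):ℂ) * (Complex.exp (θ*Complex.I))⁻¹ ^ n) volume a b :=
    fun n a b => (hfc.mul (hEc n)).intervalIntegrable a b
  have h5 : (∫ θ in (0:ℝ)..2*π, Complex.I * (f ((Real.cos θ : ℝ):ℂ) *
        ((Complex.exp (θ*Complex.I))⁻¹ ^ k - (Complex.exp (θ*Complex.I))⁻¹ ^ (k+2))))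
      = Complex.I * ((∫ θ in (0:ℝ)..2*π, f ((Real.cos θ : ℝ):ℂ) * (Complex.exp (θ*Complex.I))⁻¹ ^ k)
          - ∫ θ in (0:ℝ)..2*π, f ((Real.cos θ : ℝ):ℂ) * (Complex.exp (θ*Complex.I))⁻¹ ^ (k+2)) := by
    rw [← intervalIntegral.integral_sub (hint k 0 (2*π)) (hint (k+2) 0 (2*π)),
      ← intervalIntegral.integral_const_mul]
    apply intervalIntegral.integral_congr
    intro θ _
    beta_reduce
    ring
  -- step 6: symmetry, reduce to [0, π]
  have hJ : ∀ n : ℕ, (∫ θ in (0:ℝ)..2*π, f ((Real.cos θ : ℝ):ℂ) * (Complex.exp (θ*Complex.I))⁻¹ ^ n)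
      = 2 * ∫ θ in (0:ℝ)..π, f ((Real.cos θ : ℝ):ℂ) * ((Real.cos (n*θ) : ℝ):ℂ) := by
    intro n
    have hrefl : (∫ θ in Real.pi..2*π, f ((Real.cos θ : ℝ):ℂ) * (Complex.exp (θ*Complex.I))⁻¹ ^ n)
        = ∫ θ in (0:ℝ)..π, f ((Real.cos (2*π - θ) : ℝ):ℂ)
            * (Complex.exp (((2*π - θ : ℝ) : ℂ)*Complex.I))⁻¹ ^ n := by
      rw [intervalIntegral.integral_comp_sub_left
        (fun θ : ℝ => f ((Real.cos θ : ℝ):ℂ) * (Complex.exp (θ*Complex.I))⁻¹ ^ n) (2*π)]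
      have e1 : 2*π - π = π := by ring
      have e2 : 2*π - 0 = 2*π := by ring
      rw [e1, e2]
    have hcont2 : Continuous (fun θ : ℝ => f ((Real.cos (2*π - θ) : ℝ):ℂ)
        * (Complex.exp (((2*π - θ : ℝ) : ℂ)*Complex.I))⁻¹ ^ n) := by
      have hc : Continuous fun θ : ℝ => 2*π - θ := continuous_const.sub continuous_id
      exact (hfc.comp hc).mul ((hEc n).comp hc)
    rw [← intervalIntegral.integral_add_adjacent_intervals (hint n 0 π) (hint n π (2*π)), hrefl,
      ← intervalIntegral.integral_add (hint n 0 π) (hcont2.intervalIntegrable 0 π),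
      ← intervalIntegral.integral_const_mul]
    apply intervalIntegral.integral_congr
    intro θ _
    beta_reduce
    have hc1 : Real.cos (2*π - θ) = Real.cos θ := Real.cos_two_pi_sub θ
    have hexp : (Complex.exp (((2*π - θ : ℝ) : ℂ) * Complex.I))⁻¹
        = Complex.exp ((θ:ℂ) * Complex.I) := by
      rw [← Complex.exp_neg]
      rw [show (((2*π - θ : ℝ)) : ℂ) = 2*(π:ℝ) - (θ:ℂ) by push_cast; ring]
      rw [show -((2*((π:ℝ):ℂ) - (θ:ℂ)) * Complex.I)
          = (θ:ℂ)*Complex.I - 2*((π:ℝ):ℂ)*Complex.I by ring]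
      rw [Complex.exp_sub, Complex.exp_two_pi_mul_I, div_one]
    have hpow1 : (Complex.exp ((θ:ℂ)*Complex.I))⁻¹ ^ n
        = (Complex.exp (((n*θ : ℝ) : ℂ) * Complex.I))⁻¹ := by
      rw [inv_pow, ← Complex.exp_nat_mul]
      congr 2
      push_cast; ring
    have hpow2 : (Complex.exp ((θ:ℂ)*Complex.I)) ^ n = Complex.exp (((n*θ : ℝ) : ℂ) * Complex.I) := by
      rw [← Complex.exp_nat_mul]
      congr 1
      push_cast; ring
    rw [hc1, hexp, hpow1, hpow2]
    rw [show f ((Real.cos θ : ℝ):ℂ) * (Complex.exp (((n*θ : ℝ) : ℂ) * Complex.I))⁻¹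
        + f ((Real.cos θ : ℝ):ℂ) * Complex.exp (((n*θ : ℝ) : ℂ) * Complex.I)
        = f ((Real.cos θ : ℝ):ℂ) * (Complex.exp (((n*θ : ℝ) : ℂ) * Complex.I)
            + (Complex.exp (((n*θ : ℝ) : ℂ) * Complex.I))⁻¹) by ring]
    rw [exp_add_inv_eq (n*θ)]
    ring
  -- step 7: the difference of cosines
  have hAd : (∫ θ in (0:ℝ)..π, f ((Real.cos θ : ℝ):ℂ) * ((Real.cos ((k:ℕ)*θ) : ℝ):ℂ))
      - (∫ θ in (0:ℝ)..π, f ((Real.cos θ : ℝ):ℂ) * ((Real.cos ((k+2:ℕ)*θ) : ℝ):ℂ))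
      = 2 * ∫ θ in (0:ℝ)..π, f ((Real.cos θ : ℝ):ℂ)
          * ((Real.sin (((k:ℝ)+1)*θ) * Real.sin θ : ℝ):ℂ) := by
    have hi1 : IntervalIntegrable
        (fun θ : ℝ => f ((Real.cos θ : ℝ):ℂ) * ((Real.cos ((k:ℕ)*θ) : ℝ):ℂ)) volume 0 π := by
      apply Continuous.intervalIntegrable
      exact hfc.mul (Complex.continuous_ofReal.comp
        (Real.continuous_cos.comp (continuous_const.mul continuous_id)))
    have hi2 : IntervalIntegrable
        (fun θ : ℝ => f ((Real.cos θ : ℝ):ℂ) * ((Real.cos ((k+2:ℕ)*θ) : ℝ):ℂ)) volume 0 π := by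
      apply Continuous.intervalIntegrable
      exact hfc.mul (Complex.continuous_ofReal.comp
        (Real.continuous_cos.comp (continuous_const.mul continuous_id)))
    rw [← intervalIntegral.integral_sub hi1 hi2, ← intervalIntegral.integral_const_mul]
    apply intervalIntegral.integral_congr
    intro θ _
    beta_reduce
    have hreal : Real.cos ((k:ℝ)*θ) - Real.cos (((k+2:ℕ):ℝ)*θ)
        = 2 * (Real.sin (((k:ℝ)+1)*θ) * Real.sin θ) := by
      push_cast
      rw [Real.cos_sub_cos]
      have e1 : ((k:ℝ)*θ + ((k:ℝ)+2)*θ)/2 = ((k:ℝ)+1)*θ := by ring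
      have e2 : ((k:ℝ)*θ - ((k:ℝ)+2)*θ)/2 = -θ := by ring
      rw [e1, e2, Real.sin_neg]
      ring
    have hC := congrArg (fun t : ℝ => (t:ℂ)) hreal
    push_cast at hC ⊢
    linear_combination f (Complex.cos (θ:ℂ)) * hC
  -- step 8: chebCoeffU by substitution x = cos θ
  have hcheb : chebCoeffU f k = ((2 / π : ℝ):ℂ) * ∫ θ in (0:ℝ)..π,
      f ((Real.cos θ : ℝ):ℂ) * ((Real.sin (((k:ℝ)+1)*θ) * Real.sin θ : ℝ):ℂ) := by
    rw [chebCoeffU]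
    congr 1
    · push_cast; ring
    have hGc : ContinuousOn (fun x : ℝ => f (x:ℂ) *
        ((Real.sqrt (1 - x ^ 2) * (Polynomial.Chebyshev.U ℝ k).eval x : ℝ):ℂ))
        (Set.Icc (-1:ℝ) 1) := by
      apply ContinuousOn.mul
      · intro x hx
        have hx' : ((x:ℝ):ℂ) ∈ bernsteinDisk (R:ℝ) := by
          obtain ⟨hx1, hx2⟩ := hx
          have hxc : x = Real.cos (Real.arccos x) := (Real.cos_arccos hx1 hx2).symm
          rw [hxc]
          exact real_cos_mem_bernsteinDisk hρ.le _
        exact (((hUan _ (hUsub hx')).continuousAt).comp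
          Complex.continuous_ofReal.continuousAt).continuousWithinAt
      · exact (Complex.continuous_ofReal.comp
          ((Real.continuous_sqrt.comp (continuous_const.sub (continuous_pow 2))).mul
            (Polynomial.Chebyshev.U ℝ k).continuous)).continuousOn
    have himg : Real.cos '' (Set.uIcc (0:ℝ) π) ⊆ Set.Icc (-1:ℝ) 1 := by
      rintro y ⟨x, -, rfl⟩
      exact ⟨Real.neg_one_le_cos x, Real.cos_le_one x⟩
    have hsub := intervalIntegral.integral_comp_smul_deriv'
      (fun x (_ : x ∈ Set.uIcc (0:ℝ) π) => Real.hasDerivAt_cos x)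
      (Real.continuous_sin.neg.continuousOn) (hGc.mono himg)
    rw [Real.cos_zero, Real.cos_pi, intervalIntegral.integral_symm (-1 : ℝ) 1] at hsub
    have h₂ : (∫ x in (-1:ℝ)..1, f (x:ℂ) *
          ((Real.sqrt (1 - x ^ 2) * (Polynomial.Chebyshev.U ℝ k).eval x : ℝ):ℂ))
        = - ∫ x in (0:ℝ)..π, (-Real.sin x) • ((fun x : ℝ => f (x:ℂ) *
            ((Real.sqrt (1 - x ^ 2) * (Polynomial.Chebyshev.U ℝ k).eval x : ℝ):ℂ)) ∘ Real.cos) x := by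
      rw [hsub, neg_neg]
    rw [h₂, ← intervalIntegral.integral_neg]
    apply intervalIntegral.integral_congr
    intro x hx
    beta_reduce
    rw [Set.uIcc_of_le Real.pi_pos.le] at hx
    obtain ⟨h0x, hxπ⟩ := hx
    have hsin : 0 ≤ Real.sin x := Real.sin_nonneg_of_nonneg_of_le_pi h0x hxπ
    have hsqrt : Real.sqrt (1 - Real.cos x ^ 2) = Real.sin x := by
      rw [show 1 - Real.cos x ^ 2 = Real.sin x ^ 2 by nlinarith [Real.sin_sq_add_cos_sq x],
        Real.sqrt_sq hsin]
    have hU : (Polynomial.Chebyshev.U ℝ (k:ℤ)).eval (Real.cos x) * Real.sin x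
        = Real.sin (((k:ℝ)+1)*x) := by
      have h := Polynomial.Chebyshev.U_real_cos x (k:ℤ)
      push_cast at h ⊢
      exact h
    simp only [Function.comp_apply, neg_smul, neg_neg, Complex.real_smul]
    rw [hsqrt]
    have hUC := congrArg (fun t : ℝ => (t:ℂ)) hU
    push_cast at hUC ⊢
    linear_combination Complex.sin (x:ℂ) * f (Complex.cos (x:ℂ)) * hUC
  rw [h2, h3, h4, h5, hJ k, hJ (k+2), hcheb, ← mul_sub, hAd]
  have hπ : ((π:ℝ):ℂ) ≠ 0 := Complex.ofReal_ne_zero.mpr Real.pi_ne_zero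
  push_cast
  field_simp
end
end
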